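/- A sequent Γ ⊢ Δ is provable in the sequent calculus of binding logic if and only if the pre-cooked sequent Γ' ⊢ Δ' is provable in sequent calculus modulo the congruence generated by the rewrite system σ. -/

import Mathlib

/- ## Binding logic: syntax and sequent calculus -/

/-- A binding-logic language: function and predicate symbols with binding arities. -/
structure BSig where
  Fn : Type
  Pr : Type
  /-- binding arity of a function symbol -/
  far : Fn → List ℕ
  /-- binding arity of a predicate symbol -/
  par : Pr → List ℕ

/-- Terms of binding logic (α-equivalence classes, in locally nameless / de Bruijn style):
`bvar i` is a variable bound by a binder of a function symbol or by a quantifier,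
`fvar x` is a named free variable.  In `app f a`, the `i`-th argument `a i` is a term
in which `(S.far f).get i` additional variables (de Bruijn indices `0, …, kᵢ - 1`) are bound. -/
inductive Tm (S : BSig) : Type
  | bvar : ℕ → Tm S
  | fvar : ℕ → Tm S
  | app : (f : S.Fn) → (Fin (S.far f).length → Tm S) → Tm S

variable {S : BSig}

/-- `Tm.WF p t`: all de Bruijn variables of `t` are bound among the `p` ambient binders;
a *term of the language* (over named free variables) at binder depth `p`. -/
def Tm.WF : ℕ → Tm S → Prop
  | p, .bvar i => i < p
  | _, .fvar _ => True
  | p, .app f a => ∀ i, Tm.WF (p + (S.far f).get i) (a i)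

/-- Capture-avoiding substitution of the term `u` for the free variable `x`. -/
def Tm.subst (x : ℕ) (u : Tm S) : Tm S → Tm S
  | .bvar i => .bvar i
  | .fvar y => if y = x then u else .fvar y
  | .app f a => .app f (fun i => Tm.subst x u (a i))

/-- Instantiation of the bound variable `k` by the (locally closed) term `u`. -/
def Tm.openT (u : Tm S) : ℕ → Tm S → Tm S
  | k, .bvar i => if i = k then u else .bvar i
  | _, .fvar y => .fvar y
  | k, .app f a => .app f (fun i => Tm.openT u (k + (S.far f).get i) (a i))

/-- Free (named) variables of a term. -/
def Tm.fv : Tm S → Set ℕ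
  | .bvar _ => ∅
  | .fvar x => {x}
  | .app _ a => ⋃ i, (a i).fv

/-- Propositions of binding logic.  In `atom P a`, the `i`-th argument binds
`(S.par P).get i` variables; quantifiers bind one de Bruijn variable. -/
inductive Fm (S : BSig) : Type
  | atom : (P : S.Pr) → (Fin (S.par P).length → Tm S) → Fm S
  | imp : Fm S → Fm S → Fm S
  | conj : Fm S → Fm S → Fm S
  | disj : Fm S → Fm S → Fm S
  | bot : Fm S
  | all : Fm S → Fm S
  | ex : Fm S → Fm S

/-- `Fm.WF q A`: well-formedness of `A` under `q` ambient quantifiers. -/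
def Fm.WF : ℕ → Fm S → Prop
  | q, .atom P a => ∀ i, Tm.WF (q + (S.par P).get i) (a i)
  | q, .imp A B => Fm.WF q A ∧ Fm.WF q B
  | q, .conj A B => Fm.WF q A ∧ Fm.WF q B
  | q, .disj A B => Fm.WF q A ∧ Fm.WF q B
  | _, .bot => True
  | q, .all A => Fm.WF (q + 1) A
  | q, .ex A => Fm.WF (q + 1) A

/-- Free (named) variables of a proposition. -/
def Fm.fv : Fm S → Set ℕ
  | .atom _ a => ⋃ i, (a i).fv
  | .imp A B => A.fv ∪ B.fv
  | .conj A B => A.fv ∪ B.fv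
  | .disj A B => A.fv ∪ B.fv
  | .bot => ∅
  | .all A => A.fv
  | .ex A => A.fv

/-- Instantiation of the quantifier-bound variable `k` of a proposition by a term. -/
def Fm.openF (u : Tm S) : ℕ → Fm S → Fm S
  | k, .atom P a => .atom P (fun i => Tm.openT u (k + (S.par P).get i) (a i))
  | k, .imp A B => .imp (Fm.openF u k A) (Fm.openF u k B)
  | k, .conj A B => .conj (Fm.openF u k A) (Fm.openF u k B)
  | k, .disj A B => .disj (Fm.openF u k A) (Fm.openF u k B)
  | _, .bot => .bot
  | k, .all A => .all (Fm.openF u (k + 1) A)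
  | k, .ex A => .ex (Fm.openF u (k + 1) A)

/-- Capture-avoiding substitution of a term for a free variable in a proposition. -/
def Fm.subst (x : ℕ) (u : Tm S) : Fm S → Fm S
  | .atom P a => .atom P (fun i => Tm.subst x u (a i))
  | .imp A B => .imp (Fm.subst x u A) (Fm.subst x u B)
  | .conj A B => .conj (Fm.subst x u A) (Fm.subst x u B)
  | .disj A B => .disj (Fm.subst x u A) (Fm.subst x u B)
  | .bot => .bot
  | .all A => .all (Fm.subst x u A)
  | .ex A => .ex (Fm.subst x u A)

/-- Free variables of a multiset of propositions. -/
def mFv (Γ : Multiset (Fm S)) : Set ℕ := {x | ∃ A ∈ Γ, x ∈ A.fv}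

/-- The sequent calculus of binding logic: exactly the standard rules of classical
sequent calculus, with capture-avoiding substitution in the quantifier rules. -/
inductive Deriv (S : BSig) : Multiset (Fm S) → Multiset (Fm S) → Prop
  | ax (A : Fm S) : Deriv S {A} {A}
  | cut {Γ Δ : Multiset (Fm S)} {A : Fm S} :
      Deriv S (A ::ₘ Γ) Δ → Deriv S Γ (A ::ₘ Δ) → Deriv S Γ Δ
  | contrL {Γ Δ} {A : Fm S} : Deriv S (A ::ₘ A ::ₘ Γ) Δ → Deriv S (A ::ₘ Γ) Δ
  | contrR {Γ Δ} {A : Fm S} : Deriv S Γ (A ::ₘ A ::ₘ Δ) → Deriv S Γ (A ::ₘ Δ)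
  | weakL {Γ Δ} {A : Fm S} : Deriv S Γ Δ → Deriv S (A ::ₘ Γ) Δ
  | weakR {Γ Δ} {A : Fm S} : Deriv S Γ Δ → Deriv S Γ (A ::ₘ Δ)
  | impL {Γ Δ} {A B : Fm S} :
      Deriv S Γ (A ::ₘ Δ) → Deriv S (B ::ₘ Γ) Δ → Deriv S ((Fm.imp A B) ::ₘ Γ) Δ
  | impR {Γ Δ} {A B : Fm S} :
      Deriv S (A ::ₘ Γ) (B ::ₘ Δ) → Deriv S Γ ((Fm.imp A B) ::ₘ Δ)
  | conjL {Γ Δ} {A B : Fm S} :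
      Deriv S (A ::ₘ B ::ₘ Γ) Δ → Deriv S ((Fm.conj A B) ::ₘ Γ) Δ
  | conjR {Γ Δ} {A B : Fm S} :
      Deriv S Γ (A ::ₘ Δ) → Deriv S Γ (B ::ₘ Δ) → Deriv S Γ ((Fm.conj A B) ::ₘ Δ)
  | disjL {Γ Δ} {A B : Fm S} :
      Deriv S (A ::ₘ Γ) Δ → Deriv S (B ::ₘ Γ) Δ → Deriv S ((Fm.disj A B) ::ₘ Γ) Δ
  | disjR {Γ Δ} {A B : Fm S} :
      Deriv S Γ (A ::ₘ B ::ₘ Δ) → Deriv S Γ ((Fm.disj A B) ::ₘ Δ)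
  | botL {Γ Δ} : Deriv S ((Fm.bot) ::ₘ Γ) Δ
  | allL {Γ Δ} {A : Fm S} {t : Tm S} : Tm.WF 0 t →
      Deriv S ((Fm.openF t 0 A) ::ₘ Γ) Δ → Deriv S ((Fm.all A) ::ₘ Γ) Δ
  | allR {Γ Δ} {A : Fm S} {x : ℕ} :
      x ∉ mFv Γ → x ∉ mFv Δ → x ∉ A.fv →
      Deriv S Γ ((Fm.openF (Tm.fvar x) 0 A) ::ₘ Δ) → Deriv S Γ ((Fm.all A) ::ₘ Δ)
  | exL {Γ Δ} {A : Fm S} {x : ℕ} :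
      x ∉ mFv Γ → x ∉ mFv Δ → x ∉ A.fv →
      Deriv S ((Fm.openF (Tm.fvar x) 0 A) ::ₘ Γ) Δ → Deriv S ((Fm.ex A) ::ₘ Γ) Δ
  | exR {Γ Δ} {A : Fm S} {t : Tm S} : Tm.WF 0 t →
      Deriv S Γ ((Fm.openF t 0 A) ::ₘ Δ) → Deriv S Γ ((Fm.ex A) ::ₘ Δ)
/- ## The translated language L' : explicit substitutions and de Bruijn indices -/

/-- Sorts of `L'`: `tm n` for terms in a context of `n` bound variables, and
`sb n p` for explicit substitutions mapping `p` variables to terms of sort `n`. -/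
inductive Srt : Type
  | tm : ℕ → Srt
  | sb : ℕ → ℕ → Srt
deriving DecidableEq

/-- Terms of `L'`.  `evar x s` is a named variable of sort `s`; `qvar i` is a
(formula-level) de Bruijn variable bound by a quantifier; `idx i n` is the de Bruijn
constant `iₙ` (`1 ≤ i ≤ n`); `fa f p a` is `fₚ(a)`; `sub t s` is `t[s]`;
`eid n`, `cons`, `up n`, `comp` are `idₙ`, cons `.`, `↑ₙ` and composition `∘`. -/
inductive ETm (S : BSig) : Type
  | evar : ℕ → Srt → ETm S
  | qvar : ℕ → ETm S
  | idx : ℕ → ℕ → ETm S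
  | fa : (f : S.Fn) → ℕ → (Fin (S.far f).length → ETm S) → ETm S
  | sub : ETm S → ETm S → ETm S
  | eid : ℕ → ETm S
  | cons : ETm S → ETm S → ETm S
  | up : ℕ → ETm S
  | comp : ETm S → ETm S → ETm S

variable {S : BSig}

/-- The iterated shift `↑^k` out of context `p`:
`↑_p ∘ (↑_{p+1} ∘ ⋯ ∘ ↑_{p+k-1})`, of sort `⟨p+k, p⟩` (`id_p` for `k = 0`). -/
def upChain (S : BSig) (p : ℕ) : ℕ → ETm S
  | 0 => .eid p
  | 1 => .up p
  | k + 2 => .comp (.up p) (upChain S (p + 1) (k + 1))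

/-- Sorting judgment for `L'`; `Θ` gives the sorts of the quantifier-bound variables. -/
inductive HasSort : List Srt → ETm S → Srt → Prop
  | evar {Θ x s} : HasSort Θ (.evar x s) s
  | qvar {Θ i s} : Θ[i]? = some s → HasSort Θ (.qvar i) s
  | idx {Θ i n} : 1 ≤ i → i ≤ n → HasSort Θ (.idx i n) (.tm n)
  | fa {Θ} {f : S.Fn} {p : ℕ} {a : Fin (S.far f).length → ETm S} :
      (∀ j, HasSort Θ (a j) (.tm (p + (S.far f).get j))) →
      HasSort Θ (.fa f p a) (.tm p)
  | sub {Θ t s n p} : HasSort Θ t (.tm p) → HasSort Θ s (.sb n p) →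
      HasSort Θ (.sub t s) (.tm n)
  | eid {Θ n} : HasSort Θ (.eid n) (.sb n n)
  | cons {Θ t s n p} : HasSort Θ t (.tm n) → HasSort Θ s (.sb n p) →
      HasSort Θ (.cons t s) (.sb n (p + 1))
  | up {Θ n} : HasSort Θ (.up n) (.sb (n + 1) n)
  | comp {Θ s₁ s₂ n p q} : HasSort Θ s₁ (.sb p n) → HasSort Θ s₂ (.sb q p) →
      HasSort Θ (.comp s₁ s₂) (.sb q n)

/-- The component `1[↑^j]` (of sort `q+k`, with `1` of sort `q+k-j`). -/
def shiftOne (S : BSig) (q k j : ℕ) : ETm S :=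
  if j = 0 then .idx 1 (q + k) else .sub (.idx 1 (q + k - j)) (upChain S (q + k - j) j)

/-- Auxiliary: builds `1[↑^j]. … .1[↑^{k-1}].(s ∘ ↑^k)`. -/
def liftAux (S : BSig) (q k : ℕ) (s : ETm S) : ℕ → ℕ → ETm S
  | 0, _ => .comp s (upChain S q k)
  | m + 1, j => .cons (shiftOne S q k j) (liftAux S q k s m (j + 1))

/-- The substitution `1.1[↑].….1[↑^{k−1}].(s ∘ ↑^k)` of sort `⟨q+k, p+k⟩`,
for `s` of sort `⟨q,p⟩` (just `s` when `k = 0`). -/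
def liftSub (S : BSig) (q k : ℕ) (s : ETm S) : ETm S :=
  match k with
  | 0 => s
  | k' + 1 => liftAux S q (k' + 1) s (k' + 1) 0

/-- One step of `σ`-rewriting (at the root or in any subterm). -/
inductive Rw : ETm S → ETm S → Prop
  -- the rule n+1 → 1[↑ⁿ]
  | ridx {i n : ℕ} : 1 ≤ i → i + 1 ≤ n →
      Rw (.idx (i + 1) n) (.sub (.idx 1 (n - i)) (upChain S (n - i) i))
  -- 1[t.s] → t
  | rhead {m : ℕ} {t s : ETm S} : Rw (.sub (.idx 1 m) (.cons t s)) t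
  -- t[id] → t
  | rtid {n : ℕ} {t : ETm S} : Rw (.sub t (.eid n)) t
  -- (t[s])[s'] → t[s ∘ s']
  | rclos {t s s' : ETm S} : Rw (.sub (.sub t s) s') (.sub t (.comp s s'))
  -- id ∘ s → s
  | ridl {n : ℕ} {s : ETm S} : Rw (.comp (.eid n) s) s
  -- ↑ ∘ (t.s) → s
  | rshcons {n : ℕ} {t s : ETm S} : Rw (.comp (.up n) (.cons t s)) s
  -- (s₁ ∘ s₂) ∘ s₃ → s₁ ∘ (s₂ ∘ s₃)
  | rassoc {s₁ s₂ s₃ : ETm S} : Rw (.comp (.comp s₁ s₂) s₃) (.comp s₁ (.comp s₂ s₃))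
  -- (t.s) ∘ s' → t[s'].(s ∘ s')
  | rmap {t s s' : ETm S} : Rw (.comp (.cons t s) s') (.cons (.sub t s') (.comp s s'))
  -- s ∘ id → s
  | ridr {n : ℕ} {s : ETm S} : Rw (.comp s (.eid n)) s
  -- 1.↑ → id
  | rvarsh {n : ℕ} : Rw (.cons (.idx 1 (n + 1)) (.up n)) (.eid (n + 1))
  -- 1[s].(↑ ∘ s) → s
  | rscons {m n : ℕ} {s : ETm S} : Rw (.cons (.sub (.idx 1 m) s) (.comp (.up n) s)) s
  -- fₚ(t₁,…,tₙ)[s] → f_q(t₁[1.1[↑].….1[↑^{k₁−1}].s∘↑^{k₁}], …) for s of sort ⟨q,p⟩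
  | rfa {f : S.Fn} {p q : ℕ} {a : Fin (S.far f).length → ETm S} {s : ETm S} :
      (∃ Θ, HasSort Θ s (.sb q p)) →
      Rw (.sub (.fa f p a) s)
         (.fa f q (fun i => .sub (a i) (liftSub S q ((S.far f).get i) s)))
  -- congruence: rewriting in subterms
  | cfa {f : S.Fn} {p : ℕ} {a : Fin (S.far f).length → ETm S}
      {i : Fin (S.far f).length} {t' : ETm S} :
      Rw (a i) t' → Rw (.fa f p a) (.fa f p (Function.update a i t'))
  | csub₁ {t t' s : ETm S} : Rw t t' → Rw (.sub t s) (.sub t' s)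
  | csub₂ {t s s' : ETm S} : Rw s s' → Rw (.sub t s) (.sub t s')
  | ccons₁ {t t' s : ETm S} : Rw t t' → Rw (.cons t s) (.cons t' s)
  | ccons₂ {t s s' : ETm S} : Rw s s' → Rw (.cons t s) (.cons t s')
  | ccomp₁ {t t' s : ETm S} : Rw t t' → Rw (.comp t s) (.comp t' s)
  | ccomp₂ {t s s' : ETm S} : Rw s s' → Rw (.comp t s) (.comp t s')

/-- The congruence `≡` on terms of `L'` generated by the rewrite system `σ`. -/
def TmConv (S : BSig) : ETm S → ETm S → Prop := Relation.EqvGen Rw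

/-- A term is `σ`-normal if no rewrite step applies to it. -/
def ENormal (t : ETm S) : Prop := ∀ u, ¬ Rw t u

/-- Propositions of `L'` (quantifiers bind one variable of the indicated sort,
represented by formula-level de Bruijn indices `qvar`). -/
inductive EFm (S : BSig) : Type
  | atom : (P : S.Pr) → (Fin (S.par P).length → ETm S) → EFm S
  | imp : EFm S → EFm S → EFm S
  | conj : EFm S → EFm S → EFm S
  | disj : EFm S → EFm S → EFm S
  | bot : EFm S
  | all : Srt → EFm S → EFm S
  | ex : Srt → EFm S → EFm S

/-- Replacement of the quantifier-bound variable `k` by a term (in a term of `L'`). -/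
def ETm.openE (u : ETm S) (k : ℕ) : ETm S → ETm S
  | .qvar i => if i = k then u else .qvar i
  | .evar x s => .evar x s
  | .idx i n => .idx i n
  | .fa f p a => .fa f p (fun j => ETm.openE u k (a j))
  | .sub t s => .sub (ETm.openE u k t) (ETm.openE u k s)
  | .eid n => .eid n
  | .cons t s => .cons (ETm.openE u k t) (ETm.openE u k s)
  | .up n => .up n
  | .comp t s => .comp (ETm.openE u k t) (ETm.openE u k s)

/-- Instantiation of the quantifier-bound variable `k` of a proposition of `L'`. -/
def EFm.openF (u : ETm S) : ℕ → EFm S → EFm S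
  | k, .atom P a => .atom P (fun i => ETm.openE u k (a i))
  | k, .imp A B => .imp (EFm.openF u k A) (EFm.openF u k B)
  | k, .conj A B => .conj (EFm.openF u k A) (EFm.openF u k B)
  | k, .disj A B => .disj (EFm.openF u k A) (EFm.openF u k B)
  | _, .bot => .bot
  | k, .all s A => .all s (EFm.openF u (k + 1) A)
  | k, .ex s A => .ex s (EFm.openF u (k + 1) A)

/-- Names of the free named variables of a term of `L'`. -/
def ETm.fvs : ETm S → Set ℕ
  | .evar x _ => {x}
  | .qvar _ => ∅
  | .idx _ _ => ∅
  | .fa _ _ a => ⋃ i, (a i).fvs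
  | .sub t s => t.fvs ∪ s.fvs
  | .eid _ => ∅
  | .cons t s => t.fvs ∪ s.fvs
  | .up _ => ∅
  | .comp t s => t.fvs ∪ s.fvs

/-- Names of the free named variables of a proposition of `L'`. -/
def EFm.fvs : EFm S → Set ℕ
  | .atom _ a => ⋃ i, (a i).fvs
  | .imp A B => A.fvs ∪ B.fvs
  | .conj A B => A.fvs ∪ B.fvs
  | .disj A B => A.fvs ∪ B.fvs
  | .bot => ∅
  | .all _ A => A.fvs
  | .ex _ A => A.fvs

/-- Free variables of a multiset of `L'`-propositions. -/
def mFvE (Γ : Multiset (EFm S)) : Set ℕ := {x | ∃ A ∈ Γ, x ∈ A.fvs}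

/-- The congruence on propositions of `L'` generated by `σ`
(congruent atoms have `≡`-congruent arguments). -/
inductive FConv : EFm S → EFm S → Prop
  | atom {P : S.Pr} {a b : Fin (S.par P).length → ETm S} :
      (∀ i, TmConv S (a i) (b i)) → FConv (.atom P a) (.atom P b)
  | imp {A A' B B'} : FConv A A' → FConv B B' → FConv (.imp A B) (.imp A' B')
  | conj {A A' B B'} : FConv A A' → FConv B B' → FConv (.conj A B) (.conj A' B')
  | disj {A A' B B'} : FConv A A' → FConv B B' → FConv (.disj A B) (.disj A' B')
  | bot : FConv .bot .bot
  | all {s A A'} : FConv A A' → FConv (.all s A) (.all s A')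
  | ex {s A A'} : FConv A A' → FConv (.ex s A) (.ex s A')

/-- Sequent calculus modulo a congruence `E`, with proof length recorded:
the standard classical rules, where principal formulas need only be congruent
to the displayed shape.  `DerivM E n Γ Δ` : `Γ ⊢ Δ` has a proof of length `n`. -/
inductive DerivM (E : EFm S → EFm S → Prop) : ℕ → Multiset (EFm S) → Multiset (EFm S) → Prop
  | ax {A B : EFm S} : E A B → DerivM E 1 {A} {B}
  | cut {m n Γ Δ} {A B : EFm S} : E A B →
      DerivM E m (A ::ₘ Γ) Δ → DerivM E n Γ (B ::ₘ Δ) → DerivM E (m + n + 1) Γ Δ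
  | contrL {m Γ Δ} {A B₁ B₂ : EFm S} : E A B₁ → E A B₂ →
      DerivM E m (B₁ ::ₘ B₂ ::ₘ Γ) Δ → DerivM E (m + 1) (A ::ₘ Γ) Δ
  | contrR {m Γ Δ} {A B₁ B₂ : EFm S} : E A B₁ → E A B₂ →
      DerivM E m Γ (B₁ ::ₘ B₂ ::ₘ Δ) → DerivM E (m + 1) Γ (A ::ₘ Δ)
  | weakL {m Γ Δ} {A : EFm S} : DerivM E m Γ Δ → DerivM E (m + 1) (A ::ₘ Γ) Δ
  | weakR {m Γ Δ} {A : EFm S} : DerivM E m Γ Δ → DerivM E (m + 1) Γ (A ::ₘ Δ)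
  | impL {m n Γ Δ} {C A B : EFm S} : E C (.imp A B) →
      DerivM E m Γ (A ::ₘ Δ) → DerivM E n (B ::ₘ Γ) Δ → DerivM E (m + n + 1) (C ::ₘ Γ) Δ
  | impR {m Γ Δ} {C A B : EFm S} : E C (.imp A B) →
      DerivM E m (A ::ₘ Γ) (B ::ₘ Δ) → DerivM E (m + 1) Γ (C ::ₘ Δ)
  | conjL {m Γ Δ} {C A B : EFm S} : E C (.conj A B) →
      DerivM E m (A ::ₘ B ::ₘ Γ) Δ → DerivM E (m + 1) (C ::ₘ Γ) Δ
  | conjR {m n Γ Δ} {C A B : EFm S} : E C (.conj A B) →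
      DerivM E m Γ (A ::ₘ Δ) → DerivM E n Γ (B ::ₘ Δ) → DerivM E (m + n + 1) Γ (C ::ₘ Δ)
  | disjL {m n Γ Δ} {C A B : EFm S} : E C (.disj A B) →
      DerivM E m (A ::ₘ Γ) Δ → DerivM E n (B ::ₘ Γ) Δ → DerivM E (m + n + 1) (C ::ₘ Γ) Δ
  | disjR {m Γ Δ} {C A B : EFm S} : E C (.disj A B) →
      DerivM E m Γ (A ::ₘ B ::ₘ Δ) → DerivM E (m + 1) Γ (C ::ₘ Δ)
  | botL {Γ Δ} {A : EFm S} : E A .bot → DerivM E 1 (A ::ₘ Γ) Δ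
  | allL {m Γ Δ} {B C A : EFm S} {s : Srt} {t : ETm S} :
      E B (.all s A) → E C (EFm.openF t 0 A) → HasSort [] t s →
      DerivM E m (C ::ₘ Γ) Δ → DerivM E (m + 1) (B ::ₘ Γ) Δ
  | allR {m Γ Δ} {B A : EFm S} {s : Srt} {x : ℕ} :
      E B (.all s A) → x ∉ mFvE Γ → x ∉ mFvE Δ → x ∉ A.fvs →
      DerivM E m Γ ((EFm.openF (.evar x s) 0 A) ::ₘ Δ) → DerivM E (m + 1) Γ (B ::ₘ Δ)
  | exL {m Γ Δ} {B A : EFm S} {s : Srt} {x : ℕ} :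
      E B (.ex s A) → x ∉ mFvE Γ → x ∉ mFvE Δ → x ∉ A.fvs →
      DerivM E m ((EFm.openF (.evar x s) 0 A) ::ₘ Γ) Δ → DerivM E (m + 1) (B ::ₘ Γ) Δ
  | exR {m Γ Δ} {B C A : EFm S} {s : Srt} {t : ETm S} :
      E B (.ex s A) → E C (EFm.openF t 0 A) → HasSort [] t s →
      DerivM E m Γ (C ::ₘ Δ) → DerivM E (m + 1) Γ (B ::ₘ Δ)

/-- Provability in sequent calculus modulo the congruence `E`. -/
def DerivMod (E : EFm S → EFm S → Prop) (Γ Δ : Multiset (EFm S)) : Prop :=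
  ∃ n, DerivM E n Γ Δ

/- ## Pre-cooking : the translation from L to L' -/

/-- Pre-cooking of a term at binder depth `p` (the length of the list `l` of
bound variables): binder-bound variables become de Bruijn constants, other
variables are protected by the shift `↑^p`. -/
def Ft (S : BSig) : (p : ℕ) → Tm S → ETm S
  | p, .bvar i =>
      if i < p then .idx (i + 1) p
      else if p = 0 then .qvar (i - p) else .sub (.qvar (i - p)) (upChain S 0 p)
  | p, .fvar x =>
      if p = 0 then .evar x (.tm 0) else .sub (.evar x (.tm 0)) (upChain S 0 p)
  | p, .app f a => .fa f p (fun i => Ft S (p + (S.far f).get i) (a i))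

/-- Pre-cooking of a proposition: `A' = F(A, ε)`. -/
def Ff (S : BSig) : Fm S → EFm S
  | .atom P a => .atom P (fun i => Ft S ((S.par P).get i) (a i))
  | .imp A B => .imp (Ff S A) (Ff S B)
  | .conj A B => .conj (Ff S A) (Ff S B)
  | .disj A B => .disj (Ff S A) (Ff S B)
  | .bot => .bot
  | .all A => .all (.tm 0) (Ff S A)
  | .ex A => .ex (.tm 0) (Ff S A)

/-- Grafting `⟨v/x⟩t` in `L'`: textual replacement of the (sort-0) variable `x` by `v`. -/
def ETm.graft (x : ℕ) (v : ETm S) : ETm S → ETm S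
  | .evar y s => if y = x ∧ s = .tm 0 then v else .evar y s
  | .qvar i => .qvar i
  | .idx i n => .idx i n
  | .fa f p a => .fa f p (fun j => ETm.graft x v (a j))
  | .sub t s => .sub (ETm.graft x v t) (ETm.graft x v s)
  | .eid n => .eid n
  | .cons t s => .cons (ETm.graft x v t) (ETm.graft x v s)
  | .up n => .up n
  | .comp t s => .comp (ETm.graft x v t) (ETm.graft x v s)

/-- Substitution `(v/x)A` of a (quantifier-closed) term for a variable in a
proposition of `L'` (capture-avoiding, since terms of `L'` have no binders). -/
def EFm.graft (x : ℕ) (v : ETm S) : EFm S → EFm S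
  | .atom P a => .atom P (fun i => ETm.graft x v (a i))
  | .imp A B => .imp (EFm.graft x v A) (EFm.graft x v B)
  | .conj A B => .conj (EFm.graft x v A) (EFm.graft x v B)
  | .disj A B => .disj (EFm.graft x v A) (EFm.graft x v B)
  | .bot => .bot
  | .all s A => .all s (EFm.graft x v A)
  | .ex s A => .ex s (EFm.graft x v A)

/- ## F-terms and F-propositions -/

/-- All named variables occurring in the term have sort `0`. -/
def ETm.vars0 : ETm S → Prop
  | .evar _ s => s = .tm 0
  | .qvar _ => True
  | .idx _ _ => True
  | .fa _ _ a => ∀ i, (a i).vars0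
  | .sub t s => t.vars0 ∧ s.vars0
  | .eid _ => True
  | .cons t s => t.vars0 ∧ s.vars0
  | .up _ => True
  | .comp t s => t.vars0 ∧ s.vars0

/-- All named variables of the proposition have sort `0`, and all its
quantifiers bind variables of sort `0`. -/
def EFm.vars0F : EFm S → Prop
  | .atom _ a => ∀ i, (a i).vars0
  | .imp A B => A.vars0F ∧ B.vars0F
  | .conj A B => A.vars0F ∧ B.vars0F
  | .disj A B => A.vars0F ∧ B.vars0F
  | .bot => True
  | .all s A => s = .tm 0 ∧ A.vars0F
  | .ex s A => s = .tm 0 ∧ A.vars0F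

/-- The proposition is `σ`-normal: every term occurring in it is `σ`-normal. -/
def EFm.TmsNormal : EFm S → Prop
  | .atom _ a => ∀ i, ENormal (a i)
  | .imp A B => A.TmsNormal ∧ B.TmsNormal
  | .conj A B => A.TmsNormal ∧ B.TmsNormal
  | .disj A B => A.TmsNormal ∧ B.TmsNormal
  | .bot => True
  | .all _ A => A.TmsNormal
  | .ex _ A => A.TmsNormal

/-- Well-sortedness of a proposition of `L'` in a context `Θ` of quantified sorts. -/
def EFmSorted : List Srt → EFm S → Prop
  | Θ, .atom P a => ∀ i, HasSort Θ (a i) (.tm ((S.par P).get i))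
  | Θ, .imp A B => EFmSorted Θ A ∧ EFmSorted Θ B
  | Θ, .conj A B => EFmSorted Θ A ∧ EFmSorted Θ B
  | Θ, .disj A B => EFmSorted Θ A ∧ EFmSorted Θ B
  | _, .bot => True
  | Θ, .all s A => EFmSorted (s :: Θ) A
  | Θ, .ex s A => EFmSorted (s :: Θ) A

/-- An F-proposition: a `σ`-normal, well-sorted proposition of `L'` containing
only variables of sort `0`. -/
def FProp (A : EFm S) : Prop := A.TmsNormal ∧ A.vars0F ∧ EFmSorted [] A

/-- An F-term of sort `0`: a `σ`-normal, well-sorted term of sort `0` of `L'`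
containing only variables of sort `0`. -/
def FTerm0 (t : ETm S) : Prop := ENormal t ∧ t.vars0 ∧ HasSort [] t (.tm 0)


/- ########################################################################
   PART 1 : TmConv infrastructure
   ######################################################################## -/

namespace BL

open Relation

theorem tc_refl (t : ETm S) : TmConv S t t := EqvGen.refl t
theorem tc_symm {t u : ETm S} (h : TmConv S t u) : TmConv S u t := EqvGen.symm _ _ h
theorem tc_trans {t u v : ETm S} (h : TmConv S t u) (h' : TmConv S u v) : TmConv S t v :=
  EqvGen.trans _ _ _ h h'
theorem tc_rw {t u : ETm S} (h : Rw t u) : TmConv S t u := EqvGen.rel _ _ h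

theorem tc_lift {F : ETm S → ETm S} (hF : ∀ {a b : ETm S}, Rw a b → Rw (F a) (F b))
    {t u : ETm S} (h : TmConv S t u) : TmConv S (F t) (F u) := by
  induction h with
  | rel a b r => exact EqvGen.rel _ _ (hF r)
  | refl a => exact EqvGen.refl _
  | symm a b _ ih => exact EqvGen.symm _ _ ih
  | trans a b c _ _ ih1 ih2 => exact EqvGen.trans _ _ _ ih1 ih2

theorem tc_sub {t t' s s' : ETm S} (h : TmConv S t t') (h' : TmConv S s s') :
    TmConv S (.sub t s) (.sub t' s') :=
  tc_trans (tc_lift (fun r => Rw.csub₁ r) h) (tc_lift (fun r => Rw.csub₂ r) h')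

theorem tc_cons {t t' s s' : ETm S} (h : TmConv S t t') (h' : TmConv S s s') :
    TmConv S (.cons t s) (.cons t' s') :=
  tc_trans (tc_lift (fun r => Rw.ccons₁ r) h) (tc_lift (fun r => Rw.ccons₂ r) h')

theorem tc_comp {t t' s s' : ETm S} (h : TmConv S t t') (h' : TmConv S s s') :
    TmConv S (.comp t s) (.comp t' s') :=
  tc_trans (tc_lift (fun r => Rw.ccomp₁ r) h) (tc_lift (fun r => Rw.ccomp₂ r) h')

theorem tc_fa_update {f : S.Fn} {p : ℕ} {x y : ETm S} (h : TmConv S x y) :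
    ∀ (a : Fin (S.far f).length → ETm S) (i : Fin (S.far f).length),
      TmConv S (.fa f p (Function.update a i x)) (.fa f p (Function.update a i y)) := by
  induction h with
  | rel x y r =>
      intro a i
      have : Rw (ETm.fa f p (Function.update a i x))
          (ETm.fa f p (Function.update (Function.update a i x) i y)) := by
        refine Rw.cfa (i := i) ?_
        rw [Function.update_self]; exact r
      rw [Function.update_idem] at this
      exact tc_rw this
  | refl x => intro a i; exact tc_refl _
  | symm x y _ ih => intro a i; exact tc_symm (ih a i)
  | trans x y z _ _ ih1 ih2 => intro a i; exact tc_trans (ih1 a i) (ih2 a i)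

theorem tc_fa {f : S.Fn} {p : ℕ} {a b : Fin (S.far f).length → ETm S}
    (h : ∀ i, TmConv S (a i) (b i)) : TmConv S (.fa f p a) (.fa f p b) := by
  suffices H : ∀ (l : List (Fin (S.far f).length)) (a : Fin (S.far f).length → ETm S),
      (∀ i, i ∈ l → TmConv S (a i) (b i)) → (∀ i, i ∉ l → a i = b i) →
      TmConv S (.fa f p a) (.fa f p b) by
    exact H (List.finRange _) a (fun i _ => h i) (fun i hi => absurd (List.mem_finRange i) hi)
  intro l
  induction l with
  | nil =>
      intro a _ h2
      have : a = b := funext fun i => h2 i List.not_mem_nil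
      rw [this]; exact tc_refl _
  | cons i l ih =>
      intro a h1 h2
      have step : TmConv S (.fa f p a) (.fa f p (Function.update a i (b i))) := by
        have := tc_fa_update (f := f) (p := p) (h1 i List.mem_cons_self) a i
        rwa [Function.update_eq_self] at this
      refine tc_trans step (ih _ ?_ ?_)
      · intro j hj
        rcases eq_or_ne j i with rfl | hne
        · rw [Function.update_self]; exact tc_refl _
        · rw [Function.update_of_ne hne]; exact h1 j (List.mem_cons_of_mem _ hj)
      · intro j hj
        rcases eq_or_ne j i with rfl | hne
        · rw [Function.update_self]
        · rw [Function.update_of_ne hne]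
          exact h2 j (by simp [hj, hne])

/- decoration collapse lemmas -/

theorem collapse_eid_one (a : ℕ) : TmConv S (.eid a) (.eid 1) := by
  have h1 : TmConv S (.eid a)
      (.cons (.sub (.idx 1 1) (.eid a)) (.comp (.up 0) (.eid a))) :=
    tc_symm (tc_rw Rw.rscons)
  have h2 : TmConv S (.cons (.sub (.idx 1 1) (.eid a)) (.comp (.up 0) (.eid a)))
      (.cons (.idx 1 1) (.up 0)) :=
    tc_cons (tc_rw Rw.rtid) (tc_rw Rw.ridr)
  have h3 : TmConv S (.cons (.idx 1 1) (.up 0)) (.eid 1) := tc_rw (Rw.rvarsh (n := 0))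
  exact tc_trans h1 (tc_trans h2 h3)

theorem collapse_eid (a b : ℕ) : TmConv S (.eid a) (.eid b) :=
  tc_trans (collapse_eid_one a) (tc_symm (collapse_eid_one b))

theorem collapse_up_zero (a : ℕ) : TmConv S (.up a) (.up 0) := by
  have h1 : TmConv S (.up a) (.comp (.up a) (.eid 1)) := tc_symm (tc_rw Rw.ridr)
  have h2 : TmConv S (.comp (.up a) (.eid 1))
      (.comp (.up a) (.cons (.idx 1 1) (.up 0))) :=
    tc_comp (tc_refl _) (tc_symm (tc_rw (Rw.rvarsh (n := 0))))
  have h3 : TmConv S (.comp (.up a) (.cons (.idx 1 1) (.up 0))) (.up 0) :=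
    tc_rw Rw.rshcons
  exact tc_trans h1 (tc_trans h2 h3)

theorem collapse_up (a b : ℕ) : TmConv S (.up a) (.up b) :=
  tc_trans (collapse_up_zero a) (tc_symm (collapse_up_zero b))

theorem collapse_idx1 (m m' : ℕ) : TmConv S (.idx 1 m) (.idx 1 m') := by
  have key : ∀ n : ℕ, TmConv S (.idx 1 n) (.idx 1 0) := by
    intro n
    have h1 : TmConv S (.idx 1 n) (.sub (.idx 1 n) (.eid 0)) := tc_symm (tc_rw Rw.rtid)
    have h2 : TmConv S (.sub (.idx 1 n) (.eid 0))
        (.sub (.idx 1 n)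
          (.cons (.sub (.idx 1 0) (.eid 0)) (.comp (.up 0) (.eid 0)))) :=
      tc_sub (tc_refl _) (tc_symm (tc_rw Rw.rscons))
    have h3 : TmConv S
        (.sub (.idx 1 n) (.cons (.sub (.idx 1 0) (.eid 0)) (.comp (.up 0) (.eid 0))))
        (.sub (.idx 1 0) (.eid 0)) := tc_rw Rw.rhead
    have h4 : TmConv S (.sub (.idx 1 0) (.eid 0)) (.idx 1 0) := tc_rw Rw.rtid
    exact tc_trans h1 (tc_trans h2 (tc_trans h3 h4))
  exact tc_trans (key m) (tc_symm (key m'))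

theorem collapse_upChain (j : ℕ) : ∀ a b : ℕ, TmConv S (upChain S a j) (upChain S b j) := by
  induction j with
  | zero => intro a b; exact collapse_eid a b
  | succ j ih =>
      intro a b
      match j with
      | 0 => exact collapse_up a b
      | j + 1 =>
          show TmConv S (.comp (.up a) (upChain S (a+1) (j+1)))
            (.comp (.up b) (upChain S (b+1) (j+1)))
          exact tc_comp (collapse_up a b) (ih _ _)

theorem collapse_idx (i : ℕ) (hi : 1 ≤ i) {m m' : ℕ} (hm : i ≤ m) (hm' : i ≤ m') :
    TmConv S (.idx i m) (.idx i m') := by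
  match i, hi with
  | 1, _ => exact collapse_idx1 m m'
  | (j+2), _ =>
      have h1 : TmConv S (.idx (j+2) m) (.sub (.idx 1 (m - (j+1))) (upChain S (m - (j+1)) (j+1))) :=
        tc_rw (Rw.ridx (i := j+1) (by omega) (by omega))
      have h2 : TmConv S (.idx (j+2) m') (.sub (.idx 1 (m' - (j+1))) (upChain S (m' - (j+1)) (j+1))) :=
        tc_rw (Rw.ridx (i := j+1) (by omega) (by omega))
      exact tc_trans h1 (tc_trans
        (tc_sub (collapse_idx1 _ _) (collapse_upChain _ _ _)) (tc_symm h2))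

/-- concatenating shift chains -/
theorem upChain_concat : ∀ (j : ℕ) (i a b c : ℕ),
    TmConv S (.comp (upChain S a j) (upChain S b i)) (upChain S c (j + i)) := by
  intro j
  induction j with
  | zero =>
      intro i a b c
      exact tc_trans (tc_rw Rw.ridl) (by simpa using collapse_upChain i b c)
  | succ j ih =>
      intro i a b c
      match j with
      | 0 =>
          -- comp (up a) (upChain b i) ≡ upChain c (1 + i)
          match i with
          | 0 => exact tc_trans (tc_rw Rw.ridr) (collapse_up a c)
          | i + 1 =>
              show TmConv S (.comp (.up a) (upChain S b (i+1))) (upChain S c (1 + (i+1)))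
              have : 1 + (i + 1) = (i + 2) := by omega
              rw [this]
              show TmConv S (.comp (.up a) (upChain S b (i+1)))
                (.comp (.up c) (upChain S (c+1) (i+1)))
              exact tc_comp (collapse_up a c) (collapse_upChain _ _ _)
      | j + 1 =>
          intros
          show TmConv S (.comp (.comp (.up a) (upChain S (a+1) (j+1))) (upChain S b i))
            (upChain S c (j + 2 + i))
          refine tc_trans (tc_rw Rw.rassoc) ?_
          refine tc_trans (tc_comp (tc_refl _) (ih i (a+1) b (c+1))) ?_
          obtain ⟨m, hm⟩ : ∃ m, j + 1 + i = m + 1 := ⟨j + i, by omega⟩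
          have h2 : j + 2 + i = m + 2 := by omega
          rw [hm, h2]
          exact tc_comp (collapse_up a c) (tc_refl _)


/-- the `j`-th component of every lift chain is convertible to any other decoration -/
theorem shiftOne_conv (j q k q' k' : ℕ) : TmConv S (shiftOne S q k j) (shiftOne S q' k' j) := by
  unfold shiftOne
  by_cases hj : j = 0
  · simp only [hj, if_pos]
    exact collapse_idx1 _ _
  · simp only [if_neg hj]
    exact tc_sub (collapse_idx1 _ _) (collapse_upChain _ _ _)

theorem openE_upChain (v : ETm S) (kk : ℕ) : ∀ (m a : ℕ),
    ETm.openE v kk (upChain S a m) = upChain S a m := by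
  intro m
  induction m with
  | zero => intro a; rfl
  | succ m ih =>
      intro a
      match m with
      | 0 => rfl
      | m + 1 =>
          show ETm.openE v kk (.comp (.up a) (upChain S (a+1) (m+1))) = upChain S a (m+2)
          show ETm.comp (ETm.openE v kk (.up a)) (ETm.openE v kk (upChain S (a+1) (m+1)))
            = ETm.comp (.up a) (upChain S (a+1) (m+1))
          rw [ih]
          rfl

/-- consuming the first `i` components of a lift chain with `↑^i` -/
theorem comp_upChain_liftAux {q k : ℕ} {s : ETm S} : ∀ (i m j a : ℕ), i ≤ m →
    TmConv S (.comp (upChain S a i) (liftAux S q k s m j)) (liftAux S q k s (m - i) (j + i)) := by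
  intro i
  induction i with
  | zero =>
      intro m j a _
      simpa [upChain] using (tc_rw (Rw.ridl) : TmConv S (.comp (.eid a) (liftAux S q k s m j)) _)
  | succ i ih =>
      intro m j a him
      obtain ⟨m', rfl⟩ : ∃ m', m = m' + 1 := ⟨m - 1, by omega⟩
      match i with
      | 0 =>
          show TmConv S (.comp (.up a) (.cons (shiftOne S q k j) (liftAux S q k s m' (j+1)))) _
          refine tc_trans (tc_rw Rw.rshcons) ?_
          have h1 : m' + 1 - 1 = m' := by omega
          rw [h1]
          exact tc_refl _
      | i + 1 =>
          show TmConv S (.comp (.comp (.up a) (upChain S (a+1) (i+1))) (liftAux S q k s (m'+1) j)) _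
          refine tc_trans (tc_rw Rw.rassoc) ?_
          refine tc_trans (tc_comp (tc_refl _) (ih (m'+1) j (a+1) (by omega))) ?_
          have hm : m' + 1 - (i + 1) = (m' - i - 1) + 1 := by omega
          rw [hm]
          show TmConv S (.comp (.up a) (.cons (shiftOne S q k (j + (i+1)))
            (liftAux S q k s (m' - i - 1) (j + (i+1) + 1)))) _
          refine tc_trans (tc_rw Rw.rshcons) ?_
          have h1 : m' + 1 - (i + 1 + 1) = m' - i - 1 := by omega
          have h2 : j + (i + 1 + 1) = j + (i + 1) + 1 := by omega
          rw [h1, h2]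
          exact tc_refl _

/-- composing a lift chain with a shift on the right -/
theorem liftAux_comp_upChain {q k q2 k2 : ℕ} {s : ETm S} (hk2 : 1 ≤ k2) (b : ℕ) :
    ∀ (m j : ℕ), TmConv S (.comp (liftAux S q k s m j) (upChain S b k2))
      (liftAux S q2 (k + k2) s m (j + k2)) := by
  intro m
  induction m with
  | zero =>
      intro j
      show TmConv S (.comp (.comp s (upChain S q k)) (upChain S b k2)) (.comp s (upChain S q2 (k+k2)))
      refine tc_trans (tc_rw Rw.rassoc) ?_
      exact tc_comp (tc_refl _) (upChain_concat k k2 q b q2)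
  | succ m ih =>
      intro j
      show TmConv S (.comp (.cons (shiftOne S q k j) (liftAux S q k s m (j+1))) (upChain S b k2)) _
      refine tc_trans (tc_rw Rw.rmap) ?_
      show TmConv S (.cons (.sub (shiftOne S q k j) (upChain S b k2))
          (.comp (liftAux S q k s m (j+1)) (upChain S b k2)))
        (.cons (shiftOne S q2 (k+k2) (j + k2)) (liftAux S q2 (k+k2) s m (j + k2 + 1)))
      have htail := ih (j + 1)
      have htail' : TmConv S (.comp (liftAux S q k s m (j+1)) (upChain S b k2))
          (liftAux S q2 (k+k2) s m (j + k2 + 1)) := by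
        have : j + 1 + k2 = j + k2 + 1 := by omega
        rwa [this] at htail
      refine tc_cons ?_ htail'
      -- head : sub (shiftOne q k j) ↑^{k2}  ≡ shiftOne q2 (k+k2) (j+k2)
      have hjk2 : ¬ (j + k2 = 0) := by omega
      by_cases hj : j = 0
      · subst hj
        show TmConv S (.sub (shiftOne S q k 0) (upChain S b k2)) (shiftOne S q2 (k+k2) (0+k2))
        unfold shiftOne
        simp only [if_pos rfl, if_neg hjk2]
        rw [Nat.zero_add]
        exact tc_sub (collapse_idx1 _ _) (collapse_upChain _ _ _)
      · unfold shiftOne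
        simp only [if_neg hj, if_neg hjk2]
        refine tc_trans (tc_rw Rw.rclos) ?_
        refine tc_sub (collapse_idx1 _ _) ?_
        exact upChain_concat j k2 (q+k-j) b (q2+(k+k2)-(j+k2))

/-- lifting twice is lifting once -/
theorem lift_lift (q k k' q' : ℕ) (s : ETm S) :
    TmConv S (liftSub S q' k' (liftSub S q k s)) (liftSub S q (k + k') s) := by
  match k', k with
  | 0, k => simpa [liftSub] using tc_refl _
  | k' + 1, 0 =>
      show TmConv S (liftSub S q' (k'+1) s) _
      simp only [Nat.zero_add]
      -- liftSub q' (k'+1) s ≡ liftSub q (k'+1) s : chains with convertible components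
      -- prove componentwise by induction
      have H : ∀ (m j : ℕ), TmConv S (liftAux S q' (k'+1) s m j) (liftAux S q (k'+1) s m j) := by
        intro m
        induction m with
        | zero => intro j; exact tc_comp (tc_refl _) (collapse_upChain _ _ _)
        | succ m ih => intro j; exact tc_cons (shiftOne_conv _ _ _ _ _) (ih _)
      exact H (k'+1) 0
  | k' + 1, k + 1 =>
      -- both sides chains of length (k+1)+(k'+1)
      have H : ∀ (m j : ℕ), m + j = k' + 1 →
          TmConv S (liftAux S q' (k'+1) (liftSub S q (k+1) s) m j)
            (liftAux S q (k + 1 + (k' + 1)) s (m + (k+1)) j) := by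
        intro m
        induction m with
        | zero =>
            intro j hj
            rw [Nat.zero_add]
            show TmConv S (.comp (liftSub S q (k+1) s) (upChain S q' (k'+1)))
              (liftAux S q (k + 1 + (k' + 1)) s (k+1) j)
            have h := liftAux_comp_upChain (S := S) (q := q) (k := k+1)
              (q2 := q) (k2 := k'+1) (s := s) (by omega) q' (k+1) 0
            have h0 : (0 : ℕ) + (k' + 1) = j := by omega
            rw [h0] at h
            exact h
        | succ m ih =>
            intro j hj
            show TmConv S (.cons (shiftOne S q' (k'+1) j)
                (liftAux S q' (k'+1) (liftSub S q (k+1) s) m (j+1)))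
              (liftAux S q (k + 1 + (k' + 1)) s (m + 1 + (k+1)) j)
            have harith : m + 1 + (k+1) = (m + (k+1)) + 1 := by omega
            rw [harith]
            show TmConv S (.cons (shiftOne S q' (k'+1) j)
                (liftAux S q' (k'+1) (liftSub S q (k+1) s) m (j+1)))
              (.cons (shiftOne S q (k + 1 + (k' + 1)) j)
                (liftAux S q (k + 1 + (k' + 1)) s (m + (k+1)) (j+1)))
            exact tc_cons (shiftOne_conv _ _ _ _ _) (ih (j+1) (by omega))
      have h := H (k'+1) 0 (by omega)
      show TmConv S (liftAux S q' (k'+1) (liftSub S q (k+1) s) (k'+1) 0)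
        (liftAux S q (k + 1 + (k' + 1)) s (k + 1 + (k' + 1)) 0)
      have harith : k' + 1 + (k + 1) = k + 1 + (k' + 1) := by omega
      rw [harith] at h
      exact h

/- ### sorting lemmas -/

theorem hs_upChain {Θ : List Srt} : ∀ (m a : ℕ), HasSort Θ (upChain S a m) (.sb (a + m) a) := by
  intro m
  induction m with
  | zero => intro a; exact HasSort.eid
  | succ m ih =>
      intro a
      match m with
      | 0 => exact HasSort.up
      | m + 1 =>
          show HasSort Θ (.comp (.up a) (upChain S (a+1) (m+1))) _
          have h2 := ih (a + 1)
          have : a + (m + 1 + 1) = (a + 1) + (m + 1) := by omega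
          rw [this]
          exact HasSort.comp HasSort.up h2

theorem hs_shiftOne {Θ : List Srt} {q k j : ℕ} (hjk : j < k) :
    HasSort Θ (shiftOne S q k j) (.tm (q + k)) := by
  unfold shiftOne
  by_cases hj : j = 0
  · simp only [hj, if_pos]
    exact HasSort.idx le_rfl (by omega)
  · simp only [if_neg hj]
    have h1 : HasSort Θ (ETm.idx (S := S) 1 (q + k - j)) (.tm (q + k - j)) := by
      refine HasSort.idx le_rfl ?_
      omega
    have h2 : HasSort Θ (upChain S (q + k - j) j) (.sb ((q + k - j) + j) (q + k - j)) :=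
      hs_upChain _ _
    have h3 : (q + k - j) + j = q + k := by omega
    rw [h3] at h2
    exact HasSort.sub h1 h2

theorem hs_liftAux {Θ : List Srt} {q k p' : ℕ} {s : ETm S}
    (hs : HasSort Θ s (.sb q p')) : ∀ (m j : ℕ), m + j = k →
    HasSort Θ (liftAux S q k s m j) (.sb (q + k) (p' + m)) := by
  intro m
  induction m with
  | zero =>
      intro j _
      show HasSort Θ (.comp s (upChain S q k)) _
      exact HasSort.comp hs (hs_upChain _ _)
  | succ m ih =>
      intro j hmj
      show HasSort Θ (.cons (shiftOne S q k j) (liftAux S q k s m (j+1))) _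
      exact HasSort.cons (hs_shiftOne (by omega)) (ih (j+1) (by omega))

theorem hs_liftSub {Θ : List Srt} {q k p' : ℕ} {s : ETm S}
    (hs : HasSort Θ s (.sb q p')) : HasSort Θ (liftSub S q k s) (.sb (q + k) (p' + k)) := by
  match k with
  | 0 => simpa [liftSub] using hs
  | k + 1 => exact hs_liftAux hs (k+1) 0 (by omega)

/-- sorting of pre-cooked terms -/
theorem hs_Ft {Θ : List Srt} : ∀ (t : Tm S) (p : ℕ), Tm.WF p t → HasSort Θ (Ft S p t) (.tm p) := by
  intro t
  induction t with
  | bvar i =>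
      intro p hp
      have : i < p := hp
      simp only [Ft, if_pos this]
      exact HasSort.idx (by omega) (by omega)
  | fvar x =>
      intro p _
      by_cases hp : p = 0
      · subst hp; simp only [Ft, if_pos]; exact HasSort.evar
      · simp only [Ft, if_neg hp]
        have h2 : HasSort Θ (upChain S 0 p) (.sb (0 + p) 0) := hs_upChain _ _
        rw [Nat.zero_add] at h2
        exact HasSort.sub HasSort.evar h2
  | app f a ih =>
      intro p hp
      exact HasSort.fa (fun j => ih j _ (hp j))

/- ### the shift lemma : F(t)[1…1.↑^p-lift] ≡ F_{p+k}(t) -/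

theorem Lshift : ∀ (t : Tm S) (k : ℕ), Tm.WF k t → ∀ p, 1 ≤ p →
    TmConv S (.sub (Ft S k t) (liftSub S p k (upChain S 0 p))) (Ft S (p + k) t) := by
  intro t
  induction t with
  | bvar i =>
      intro k hk p hp
      have hik : i < k := hk
      have hipk : i < p + k := by omega
      simp only [Ft, if_pos hik, if_pos hipk]
      obtain ⟨k', rfl⟩ : ∃ k', k = k' + 1 := ⟨k - 1, by omega⟩
      match i with
      | 0 =>
          show TmConv S (.sub (.idx 1 (k'+1)) (liftAux S p (k'+1) (upChain S 0 p) (k'+1) 0)) _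
          refine tc_trans (tc_rw Rw.rhead) ?_
          show TmConv S (shiftOne S p (k'+1) 0) _
          unfold shiftOne
          simp only [if_pos rfl]
          exact tc_refl _
      | i + 1 =>
          refine tc_trans (tc_sub (tc_rw (Rw.ridx (i := i+1) (by omega) (by omega))) (tc_refl _)) ?_
          refine tc_trans (tc_rw Rw.rclos) ?_
          refine tc_trans (tc_sub (tc_refl _)
            (comp_upChain_liftAux (i+1) (k'+1) 0 _ (by omega))) ?_
          obtain ⟨d, hd⟩ : ∃ d, k' + 1 - (i+1) = d + 1 := ⟨k' - i - 1, by omega⟩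
          rw [hd]
          have h0 : (0 : ℕ) + (i + 1) = i + 1 := by omega
          rw [h0]
          refine tc_trans (tc_rw Rw.rhead) ?_
          show TmConv S (shiftOne S p (k'+1) (i+1)) _
          unfold shiftOne
          simp only [if_neg (Nat.succ_ne_zero i)]
          refine tc_symm (tc_rw ?_)
          have hr := Rw.ridx (S := S) (i := i+1) (n := p + (k'+1)) (by omega) (by omega)
          have harith : p + (k' + 1) - (i + 1) = p + (k'+1) - (i+1) := rfl
          convert hr using 3 <;> omega
  | fvar x =>
      intro k hk p hp
      have hppos : ¬ (p + k = 0) := by omega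
      by_cases hk0 : k = 0
      · subst hk0
        simp only [Ft, if_pos rfl, if_neg hppos, liftSub]
        exact tc_refl _
      · simp only [Ft, if_neg hk0, if_neg hppos]
        refine tc_trans (tc_rw Rw.rclos) ?_
        obtain ⟨k', rfl⟩ : ∃ k', k = k' + 1 := ⟨k - 1, by omega⟩
        refine tc_trans (tc_sub (tc_refl _)
          (comp_upChain_liftAux (k'+1) (k'+1) 0 _ le_rfl)) ?_
        simp only [Nat.sub_self]
        show TmConv S (.sub (.evar x (.tm 0)) (.comp (upChain S 0 p) (upChain S p (k'+1)))) _
        exact tc_sub (tc_refl _) (upChain_concat _ _ _ _ _)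
  | app f a ih =>
      intro k hk p hp
      show TmConv S (.sub (.fa f k (fun i => Ft S (k + (S.far f).get i) (a i)))
        (liftSub S p k (upChain S 0 p))) _
      have hsort : ∃ Θ, HasSort Θ (liftSub S p k (upChain S 0 p)) (.sb (p + k) k) := by
        refine ⟨[], ?_⟩
        have h1 : HasSort ([] : List Srt) (upChain S 0 p) (.sb (0 + p) 0) := hs_upChain _ _
        rw [Nat.zero_add] at h1
        have := hs_liftSub (k := k) h1
        rwa [Nat.zero_add] at this
      refine tc_trans (tc_rw (Rw.rfa hsort)) ?_
      show TmConv S (.fa f (p + k) _) (.fa f (p + k) _)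
      refine tc_fa (fun i => ?_)
      refine tc_trans (tc_sub (tc_refl _) (lift_lift p k ((S.far f).get i) (p + k) _)) ?_
      have := ih i (k + (S.far f).get i) (hk i) p hp
      refine tc_trans this ?_
      have : p + (k + (S.far f).get i) = p + k + (S.far f).get i := by omega
      rw [this]
      exact tc_refl _

/- ### pre-cooking commutes with instantiation, up to ≡ -/

theorem LopenT (u : Tm S) (hu : Tm.WF 0 u) : ∀ (t : Tm S) (p k : ℕ),
    TmConv S (Ft S p (Tm.openT u (k + p) t)) (ETm.openE (Ft S 0 u) k (Ft S p t)) := by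
  intro t
  induction t with
  | bvar i =>
      intro p k
      by_cases hi : i = k + p
      · subst hi
        simp only [Tm.openT, if_pos rfl]
        have hnlt : ¬ (k + p < p) := by omega
        by_cases hp : p = 0
        · subst hp
          simp only [Ft, if_neg hnlt, if_pos rfl, ETm.openE, Nat.sub_zero, Nat.add_zero, Nat.not_lt_zero, if_false, if_true]
          first
          | exact tc_refl _
          | (simp only [if_pos rfl]; exact tc_refl _)
        · simp only [Ft, if_neg hnlt, if_neg hp, ETm.openE]
          have hq : k + p - p = k := by omega
          rw [hq]
          simp only [ETm.openE, if_pos rfl, openE_upChain]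
          have := Lshift u 0 hu p (by omega)
          simp only [liftSub] at this
          exact tc_symm this
      · simp only [Tm.openT, if_neg hi]
        by_cases hlt : i < p
        · simp only [Ft, if_pos hlt, ETm.openE]; exact tc_refl _
        · by_cases hp : p = 0
          · subst hp
            simp only [Ft, if_neg hlt, if_pos rfl, ETm.openE, Nat.sub_zero, if_true]
            have : ¬ (i = k) := by omega
            simp only [if_neg this]
            exact tc_refl _
          · simp only [Ft, if_neg hlt, if_neg hp, ETm.openE, openE_upChain]
            have : ¬ (i - p = k) := by omega
            simp only [if_neg this]
            exact tc_refl _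
  | fvar x =>
      intro p k
      by_cases hp : p = 0
      · subst hp; simp only [Tm.openT, Ft, if_pos rfl, ETm.openE]; exact tc_refl _
      · simp only [Tm.openT, Ft, if_neg hp, ETm.openE, openE_upChain]; exact tc_refl _
  | app f a ih =>
      intro p k
      show TmConv S (.fa f p (fun i => Ft S (p + (S.far f).get i)
          (Tm.openT u (k + p + (S.far f).get i) (a i))))
        (.fa f p (fun i => ETm.openE (Ft S 0 u) k (Ft S (p + (S.far f).get i) (a i))))
      refine tc_fa (fun i => ?_)
      have harith : k + p + (S.far f).get i = k + (p + (S.far f).get i) := by omega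
      rw [harith]
      exact ih i (p + (S.far f).get i) k

theorem fconv_refl : ∀ (A : EFm S), FConv A A := by
  intro A
  induction A with
  | atom P a => exact FConv.atom (fun i => tc_refl _)
  | imp A B ihA ihB => exact FConv.imp ihA ihB
  | conj A B ihA ihB => exact FConv.conj ihA ihB
  | disj A B ihA ihB => exact FConv.disj ihA ihB
  | bot => exact FConv.bot
  | all s A ih => exact FConv.all ih
  | ex s A ih => exact FConv.ex ih

theorem fconv_symm {A B : EFm S} (h : FConv A B) : FConv B A := by
  induction h with
  | atom h => exact FConv.atom (fun i => tc_symm (h i))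
  | imp _ _ ih1 ih2 => exact FConv.imp ih1 ih2
  | conj _ _ ih1 ih2 => exact FConv.conj ih1 ih2
  | disj _ _ ih1 ih2 => exact FConv.disj ih1 ih2
  | bot => exact FConv.bot
  | all _ ih => exact FConv.all ih
  | ex _ ih => exact FConv.ex ih

theorem LopenF (u : Tm S) (hu : Tm.WF 0 u) : ∀ (A : Fm S) (k : ℕ),
    FConv (Ff S (Fm.openF u k A)) (EFm.openF (Ft S 0 u) k (Ff S A)) := by
  intro A
  induction A with
  | atom P a =>
      intro k
      exact FConv.atom (fun i => LopenT u hu (a i) ((S.par P).get i) k)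
  | imp A B ihA ihB => intro k; exact FConv.imp (ihA k) (ihB k)
  | conj A B ihA ihB => intro k; exact FConv.conj (ihA k) (ihB k)
  | disj A B ihA ihB => intro k; exact FConv.disj (ihA k) (ihB k)
  | bot => intro k; exact FConv.bot
  | all A ih => intro k; exact FConv.all (ih (k+1))
  | ex A ih => intro k; exact FConv.ex (ih (k+1))


/- ### free variables of pre-cooked terms -/

theorem fvs_upChain : ∀ (m a : ℕ), (upChain S a m).fvs = (∅ : Set ℕ) := by
  intro m
  induction m with
  | zero => intro a; rfl
  | succ m ih =>
      intro a
      match m with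
      | 0 => rfl
      | m + 1 =>
          show (ETm.comp (.up a) (upChain S (a+1) (m+1))).fvs = ∅
          show (ETm.up a).fvs ∪ (upChain S (a+1) (m+1)).fvs = ∅
          rw [ih]
          simp [ETm.fvs]

theorem fvs_Ft : ∀ (t : Tm S) (p : ℕ), (Ft S p t).fvs = t.fv := by
  intro t
  induction t with
  | bvar i =>
      intro p
      by_cases h : i < p
      · simp [Ft, if_pos h, ETm.fvs, Tm.fv]
      · by_cases hp : p = 0
        · simp [Ft, if_neg h, if_pos hp, hp, ETm.fvs, Tm.fv]
        · simp [Ft, if_neg h, if_neg hp, ETm.fvs, Tm.fv, fvs_upChain]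
  | fvar x =>
      intro p
      by_cases hp : p = 0
      · simp [Ft, if_pos hp, hp, ETm.fvs, Tm.fv]
      · simp [Ft, if_neg hp, ETm.fvs, Tm.fv, fvs_upChain]
  | app f a ih =>
      intro p
      show (⋃ i, (Ft S (p + (S.far f).get i) (a i)).fvs) = ⋃ i, (a i).fv
      exact Set.iUnion_congr (fun i => ih i _)

theorem fvs_Ff : ∀ (A : Fm S), (Ff S A).fvs = A.fv := by
  intro A
  induction A with
  | atom P a =>
      show (⋃ i, (Ft S ((S.par P).get i) (a i)).fvs) = ⋃ i, (a i).fv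
      exact Set.iUnion_congr (fun i => fvs_Ft _ _)
  | imp A B ihA ihB => show (Ff S A).fvs ∪ (Ff S B).fvs = A.fv ∪ B.fv; rw [ihA, ihB]
  | conj A B ihA ihB => show (Ff S A).fvs ∪ (Ff S B).fvs = A.fv ∪ B.fv; rw [ihA, ihB]
  | disj A B ihA ihB => show (Ff S A).fvs ∪ (Ff S B).fvs = A.fv ∪ B.fv; rw [ihA, ihB]
  | bot => rfl
  | all A ih => exact ih
  | ex A ih => exact ih

theorem mFvE_mapFf (Γ : Multiset (Fm S)) : mFvE (Γ.map (Ff S)) = mFv Γ := by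
  ext x
  simp only [mFvE, mFv, Set.mem_setOf_eq, Multiset.mem_map]
  constructor
  · rintro ⟨A, ⟨B, hB, rfl⟩, hx⟩
    exact ⟨B, hB, by rwa [fvs_Ff] at hx⟩
  · rintro ⟨B, hB, hx⟩
    exact ⟨Ff S B, ⟨B, hB, rfl⟩, by rwa [fvs_Ff]⟩

/- ### DerivMod helpers -/

section Dmod

variable {E : EFm S → EFm S → Prop}

theorem dmod_weakL {Γ Δ : Multiset (EFm S)} {A : EFm S} (h : DerivMod E Γ Δ) :
    DerivMod E (A ::ₘ Γ) Δ := by obtain ⟨n, h⟩ := h; exact ⟨n+1, .weakL h⟩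

theorem dmod_weakR {Γ Δ : Multiset (EFm S)} {A : EFm S} (h : DerivMod E Γ Δ) :
    DerivMod E Γ (A ::ₘ Δ) := by obtain ⟨n, h⟩ := h; exact ⟨n+1, .weakR h⟩

theorem dmod_weakL_many {Γ Δ : Multiset (EFm S)} (Γ₀ : Multiset (EFm S))
    (h : DerivMod E Γ Δ) : DerivMod E (Γ₀ + Γ) Δ := by
  induction Γ₀ using Multiset.induction_on with
  | empty => simpa using h
  | cons a Γ₀ ih => rw [Multiset.cons_add]; exact dmod_weakL ih

theorem dmod_weakR_many {Γ Δ : Multiset (EFm S)} (Δ₀ : Multiset (EFm S))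
    (h : DerivMod E Γ Δ) : DerivMod E Γ (Δ₀ + Δ) := by
  induction Δ₀ using Multiset.induction_on with
  | empty => simpa using h
  | cons a Δ₀ ih => rw [Multiset.cons_add]; exact dmod_weakR ih

theorem dmod_axctx (hrefl : ∀ A : EFm S, E A A) (A : EFm S) (Γ Δ : Multiset (EFm S)) :
    DerivMod E (A ::ₘ Γ) (A ::ₘ Δ) := by
  have h0 : DerivMod E {A} {A} := ⟨1, .ax (hrefl A)⟩
  have h1 := dmod_weakR_many (Γ := {A}) Δ h0
  have h2 := dmod_weakL_many Γ h1
  rw [add_comm Γ {A}, Multiset.singleton_add] at h2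
  rwa [add_comm Δ {A}, Multiset.singleton_add] at h2

theorem dmod_replaceR (hrefl : ∀ A : EFm S, E A A) (hsymm : ∀ {A B : EFm S}, E A B → E B A)
    {Γ Δ : Multiset (EFm S)} {A B : EFm S}
    (h : DerivMod E Γ (A ::ₘ Δ)) (hAB : E A B) : DerivMod E Γ (B ::ₘ Δ) := by
  obtain ⟨n1, hax⟩ := dmod_axctx hrefl B Γ Δ
  obtain ⟨n, h⟩ := h
  have h' : DerivM E (n+1) Γ (A ::ₘ B ::ₘ Δ) := by
    have := DerivM.weakR (A := B) h
    rwa [Multiset.cons_swap] at this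
  exact ⟨_, .cut (hsymm hAB) hax h'⟩

theorem dmod_replaceL (hrefl : ∀ A : EFm S, E A A) (hsymm : ∀ {A B : EFm S}, E A B → E B A)
    {Γ Δ : Multiset (EFm S)} {A B : EFm S}
    (h : DerivMod E (A ::ₘ Γ) Δ) (hAB : E A B) : DerivMod E (B ::ₘ Γ) Δ := by
  obtain ⟨n1, hax⟩ := dmod_axctx hrefl B Γ Δ
  obtain ⟨n, h⟩ := h
  have h' : DerivM E (n+1) (A ::ₘ B ::ₘ Γ) Δ := by
    have := DerivM.weakL (A := B) h
    rwa [Multiset.cons_swap] at this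
  exact ⟨_, .cut hAB h' hax⟩

end Dmod

/- ### the forward direction -/

theorem forward {Γ Δ : Multiset (Fm S)} (d : Deriv S Γ Δ) :
    DerivMod FConv (Γ.map (Ff S)) (Δ.map (Ff S)) := by
  induction d with
  | ax A => exact ⟨1, .ax (fconv_refl _)⟩
  | cut _ _ ih1 ih2 =>
      rw [Multiset.map_cons] at ih1 ih2
      obtain ⟨n1, h1⟩ := ih1; obtain ⟨n2, h2⟩ := ih2
      exact ⟨_, .cut (fconv_refl _) h1 h2⟩
  | contrL _ ih =>
      rw [Multiset.map_cons, Multiset.map_cons] at ih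
      obtain ⟨n, h⟩ := ih
      rw [Multiset.map_cons]
      exact ⟨_, .contrL (fconv_refl _) (fconv_refl _) h⟩
  | contrR _ ih =>
      rw [Multiset.map_cons, Multiset.map_cons] at ih
      obtain ⟨n, h⟩ := ih
      rw [Multiset.map_cons]
      exact ⟨_, .contrR (fconv_refl _) (fconv_refl _) h⟩
  | weakL _ ih => rw [Multiset.map_cons]; exact dmod_weakL ih
  | weakR _ ih => rw [Multiset.map_cons]; exact dmod_weakR ih
  | impL _ _ ih1 ih2 =>
      rw [Multiset.map_cons] at ih1 ih2
      obtain ⟨n1, h1⟩ := ih1; obtain ⟨n2, h2⟩ := ih2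
      rw [Multiset.map_cons]
      exact ⟨_, .impL (fconv_refl _) h1 h2⟩
  | impR _ ih =>
      rw [Multiset.map_cons, Multiset.map_cons] at ih
      obtain ⟨n, h⟩ := ih
      rw [Multiset.map_cons]
      exact ⟨_, .impR (fconv_refl _) h⟩
  | conjL _ ih =>
      rw [Multiset.map_cons, Multiset.map_cons] at ih
      obtain ⟨n, h⟩ := ih
      rw [Multiset.map_cons]
      exact ⟨_, .conjL (fconv_refl _) h⟩
  | conjR _ _ ih1 ih2 =>
      rw [Multiset.map_cons] at ih1 ih2
      obtain ⟨n1, h1⟩ := ih1; obtain ⟨n2, h2⟩ := ih2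
      rw [Multiset.map_cons]
      exact ⟨_, .conjR (fconv_refl _) h1 h2⟩
  | disjL _ _ ih1 ih2 =>
      rw [Multiset.map_cons] at ih1 ih2
      obtain ⟨n1, h1⟩ := ih1; obtain ⟨n2, h2⟩ := ih2
      rw [Multiset.map_cons]
      exact ⟨_, .disjL (fconv_refl _) h1 h2⟩
  | disjR _ ih =>
      rw [Multiset.map_cons, Multiset.map_cons] at ih
      obtain ⟨n, h⟩ := ih
      rw [Multiset.map_cons]
      exact ⟨_, .disjR (fconv_refl _) h⟩
  | botL =>
      rw [Multiset.map_cons]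
      exact ⟨1, .botL (fconv_refl _)⟩
  | @allL Γ Δ A t hWF _ ih =>
      rw [Multiset.map_cons] at ih
      obtain ⟨n, h⟩ := ih
      rw [Multiset.map_cons]
      refine ⟨_, .allL (s := .tm 0) (t := Ft S 0 t) (A := Ff S A)
        (fconv_refl _) ?_ (hs_Ft t 0 hWF) h⟩
      exact LopenF t hWF A 0
  | @allR Γ Δ A x hxΓ hxΔ hxA _ ih =>
      rw [Multiset.map_cons] at ih
      have ih' := dmod_replaceR (E := FConv) fconv_refl (fun h => fconv_symm h) ih
        (LopenF (Tm.fvar x) trivial A 0)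
      obtain ⟨n, h⟩ := ih'
      rw [Multiset.map_cons]
      refine ⟨_, .allR (s := .tm 0) (A := Ff S A) (x := x) (fconv_refl _) ?_ ?_ ?_ h⟩
      · rwa [mFvE_mapFf]
      · rwa [mFvE_mapFf]
      · rwa [fvs_Ff]
  | @exL Γ Δ A x hxΓ hxΔ hxA _ ih =>
      rw [Multiset.map_cons] at ih
      have ih' := dmod_replaceL (E := FConv) fconv_refl (fun h => fconv_symm h) ih
        (LopenF (Tm.fvar x) trivial A 0)
      obtain ⟨n, h⟩ := ih'
      rw [Multiset.map_cons]
      refine ⟨_, .exL (s := .tm 0) (A := Ff S A) (x := x) (fconv_refl _) ?_ ?_ ?_ h⟩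
      · rwa [mFvE_mapFf]
      · rwa [mFvE_mapFf]
      · rwa [fvs_Ff]
  | @exR Γ Δ A t hWF _ ih =>
      rw [Multiset.map_cons] at ih
      obtain ⟨n, h⟩ := ih
      rw [Multiset.map_cons]
      refine ⟨_, .exR (s := .tm 0) (t := Ft S 0 t) (A := Ff S A)
        (fconv_refl _) ?_ (hs_Ft t 0 hWF) h⟩
      exact LopenF t hWF A 0


/- ########################################################################
   PART 4 : a path semantics for L', invariant under the rewrite system σ
   ######################################################################## -/

/-- values : functions from projection paths to optional terms -/
def Val (S : BSig) := List ℕ → Option (Tm S)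

/-- default junk term -/
def junkT (S : BSig) : Tm S := .fvar 2

/-- constant (clean term) value -/
def cVal (T : Tm S) : Val S := fun π => if π = [] then some T else none

/-- map a term transformation over a value -/
def mapV (σ : Tm S → Tm S) (v : Val S) : Val S := fun π => (v π).map σ

/-- shifting of de Bruijn (binder) indices above a cutoff -/
def shiftTm (k : ℕ) : ℕ → Tm S → Tm S
  | d, .bvar j => if j < d then .bvar j else .bvar (j + k)
  | _, .fvar c => .fvar c
  | d, .app f a => .app f (fun i => shiftTm k (d + (S.far f).get i) (a i))

/-- environment shift : drop the first `m` components -/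
def upV (m : ℕ) (v : Val S) : Val S := fun π =>
  match π with
  | [] => v []
  | j :: π' => v ((j + m) :: π')

/-- lifting a value under `k` binders -/
def liftV (k : ℕ) (v : Val S) : Val S :=
  match k with
  | 0 => v
  | _ + 1 => fun π =>
      match π with
      | [] => (v []).map (shiftTm k 0)
      | j :: π' =>
          if j < k then (if π' = [] then some (.bvar j) else none)
          else (v ((j - k) :: π')).map (shiftTm k 0)

/-- environment functions : semantic values for named and quantifier variables -/
def VFn (S : BSig) := Val S → Val S

/-- shift-equivariance of an environment function -/
def SEq (φ : VFn S) : Prop :=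
  ∀ (k d : ℕ) (v : Val S), φ (mapV (shiftTm k d) v) = mapV (shiftTm k d) (φ v)

/-- the evaluation of terms of L' as path functions, parametrized by assignments
`η` (named variables) and `χ` (quantifier variables) -/
def evalE (η : ℕ → Srt → VFn S) (χ : ℕ → VFn S) : ETm S → Val S → Val S
  | .evar x s, v => η x s v
  | .qvar k, v => χ k v
  | .idx i _, v => fun π => v ((i - 1) :: π)
  | .fa f _ a, v =>
      cVal (.app f (fun i => ((evalE η χ (a i) (liftV ((S.far f).get i) v)) []).getD (junkT S)))
  | .sub t s, v => evalE η χ t (evalE η χ s v)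
  | .eid _, v => v
  | .cons t s, v => fun π =>
      match π with
      | [] => evalE η χ s v []
      | 0 :: π' => evalE η χ t v π'
      | (j+1) :: π' => evalE η χ s v (j :: π')
  | .up _, v => fun π =>
      match π with
      | [] => v []
      | j :: π' => v ((j + 1) :: π')
  | .comp t s, v => evalE η χ t (evalE η χ s v)

variable {η : ℕ → Srt → VFn S} {χ : ℕ → VFn S}

theorem evalE_upChain (v : Val S) : ∀ (m a : ℕ), evalE η χ (upChain S a m) v = upV m v := by
  intro m
  induction m with
  | zero =>
      intro a
      funext π
      match π with
      | [] => rfl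
      | j :: π' => show v (j :: π') = v ((j + 0) :: π'); rw [Nat.add_zero]
  | succ m ih =>
      intro a
      match m with
      | 0 => rfl
      | m + 1 =>
          show evalE η χ (.comp (.up a) (upChain S (a+1) (m+1))) v = _
          show evalE η χ (.up a) (evalE η χ (upChain S (a+1) (m+1)) v) = _
          rw [ih]
          funext π
          match π with
          | [] => rfl
          | j :: π' =>
              show v ((j + 1 + (m+1)) :: π') = v ((j + (m+2)) :: π')
              have : j + 1 + (m+1) = j + (m+2) := by omega
              rw [this]

/-- the Tm-level shift/shift commutation -/
theorem shiftTm_shiftTm : ∀ (T : Tm S) (k c d e : ℕ), e ≤ d →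
    shiftTm k (d + c) (shiftTm c e T) = shiftTm c e (shiftTm k d T) := by
  intro T
  induction T with
  | bvar j =>
      intro k c d e hed
      simp only [shiftTm]
      rcases lt_or_ge j e with h1 | h1
      · rw [if_pos h1, if_pos (by omega : j < d)]
        simp only [shiftTm]
        rw [if_pos (by omega : j < d + c), if_pos h1]
      · rw [if_neg (by omega : ¬ j < e)]
        rcases lt_or_ge j d with h2 | h2
        · rw [if_pos h2]
          simp only [shiftTm]
          rw [if_pos (by omega : j + c < d + c), if_neg (by omega : ¬ j < e)]
        · rw [if_neg (by omega : ¬ j < d)]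
          simp only [shiftTm]
          rw [if_neg (by omega : ¬ j + c < d + c), if_neg (by omega : ¬ j + k < e)]
          congr 1
          omega
  | fvar c => intros; rfl
  | app f a ih =>
      intro k c d e hed
      simp only [shiftTm]
      congr 1
      funext i
      have := ih i k c (d + (S.far f).get i) (e + (S.far f).get i) (by omega)
      have harith : d + (S.far f).get i + c = d + c + (S.far f).get i := by omega
      rw [harith] at this
      exact this

theorem shiftTm_junk (k d : ℕ) : shiftTm k d (junkT S) = junkT S := rfl

theorem mapV_cVal (σ : Tm S → Tm S) (T : Tm S) : mapV σ (cVal T) = cVal (σ T) := by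
  funext π
  by_cases h : π = []
  · simp [mapV, cVal, h]
  · simp [mapV, cVal, h]

/-- evaluation commutes with uniform shifting of the environment -/
theorem evalE_shift (hη : ∀ x s, SEq (η x s)) (hχ : ∀ k, SEq (χ k)) :
    ∀ (e : ETm S) (v : Val S) (k d : ℕ),
    evalE η χ e (mapV (shiftTm k d) v) = mapV (shiftTm k d) (evalE η χ e v) := by
  intro e
  induction e with
  | evar x s => intro v k d; exact hη x s k d v
  | qvar j => intro v k d; exact hχ j k d v
  | idx i n => intro v k d; rfl
  | fa f p a ih =>
      intro v k d
      show cVal (.app f _) = mapV _ (cVal (.app f _))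
      rw [mapV_cVal]
      simp only [shiftTm]
      refine congrArg cVal ?_
      refine congrArg (Tm.app f) ?_
      funext i
      set ki := (S.far f).get i with hki
      have hlift : liftV ki (mapV (shiftTm k d) v) = mapV (shiftTm k (d + ki)) (liftV ki v) := by
        match hk : ki with
        | 0 =>
            funext π
            show mapV (shiftTm k d) v π = mapV (shiftTm k (d+0)) v π
            rw [Nat.add_zero]
        | m + 1 =>
            funext π
            match π with
            | [] =>
                show ((v []).map (shiftTm k d)).map (shiftTm (m+1) 0)
                  = ((v []).map (shiftTm (m+1) 0)).map (shiftTm k (d + (m+1)))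
                cases hv : v [] with
                | none => rfl
                | some T =>
                    simp only [Option.map_some]
                    congr 1
                    exact (shiftTm_shiftTm T k (m+1) d 0 (by omega)).symm
            | j :: π' =>
                by_cases hj : j < m + 1
                · show (if j < m+1 then _ else _) = Option.map _ (if j < m+1 then _ else _)
                  rw [if_pos hj, if_pos hj]
                  by_cases hπ : π' = []
                  · simp only [hπ, if_pos]
                    show some (Tm.bvar j) = some (shiftTm k (d + (m+1)) (.bvar j))
                    simp only [shiftTm]
                    rw [if_pos (by omega : j < d + (m+1))]
                  · simp only [if_neg hπ]; rfl
                · show (if j < m+1 then _ else _) = Option.map _ (if j < m+1 then _ else _)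
                  rw [if_neg hj, if_neg hj]
                  show ((v ((j - (m+1)) :: π')).map (shiftTm k d)).map (shiftTm (m+1) 0)
                    = ((v ((j - (m+1)) :: π')).map (shiftTm (m+1) 0)).map (shiftTm k (d + (m+1)))
                  cases hv : v ((j - (m+1)) :: π') with
                  | none => rfl
                  | some T =>
                      simp only [Option.map_some]
                      congr 1
                      exact (shiftTm_shiftTm T k (m+1) d 0 (by omega)).symm
      rw [hlift, ih i]
      show ((mapV (shiftTm k (d + ki)) (evalE η χ (a i) (liftV ki v))) []).getD (junkT S)
        = shiftTm k (d + ki) (((evalE η χ (a i) (liftV ki v)) []).getD (junkT S))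
      cases hv : (evalE η χ (a i) (liftV ki v)) [] with
      | none => simp [mapV, hv, shiftTm_junk]
      | some T => simp [mapV, hv]
  | sub t s iht ihs =>
      intro v k d
      show evalE η χ t (evalE η χ s (mapV (shiftTm k d) v)) = _
      rw [ihs, iht]
      rfl
  | eid n => intro v k d; rfl
  | cons t s iht ihs =>
      intro v k d
      funext π
      match π with
      | [] => show evalE η χ s (mapV (shiftTm k d) v) [] = _; rw [ihs]; rfl
      | 0 :: π' => show evalE η χ t (mapV (shiftTm k d) v) π' = _; rw [iht]; rfl
      | (j+1) :: π' => show evalE η χ s (mapV (shiftTm k d) v) (j :: π') = _; rw [ihs]; rfl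
  | up n =>
      intro v k d
      funext π
      match π with
      | [] => rfl
      | j :: π' => rfl
  | comp t s iht ihs =>
      intro v k d
      show evalE η χ t (evalE η χ s (mapV (shiftTm k d) v)) = _
      rw [ihs, iht]
      rfl


def laV (W : Val S) (m j : ℕ) : Val S := fun π =>
  match π with
  | [] => W []
  | i :: π' => if i < m then (if π' = [] then some (.bvar (j+i)) else none) else W ((i - m) :: π')

theorem upV_liftV (m : ℕ) (v : Val S) :
    upV (m+1) (liftV (m+1) v) = mapV (shiftTm (m+1) 0) v := by
  funext π
  match π with
  | [] => rfl
  | j :: π' =>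
      show liftV (m+1) v ((j + (m+1)) :: π') = _
      show (if j + (m+1) < m+1 then _ else (v ((j + (m+1) - (m+1)) :: π')).map (shiftTm (m+1) 0)) = _
      rw [if_neg (by omega : ¬ j + (m+1) < m + 1)]
      have : j + (m+1) - (m+1) = j := by omega
      rw [this]
      rfl

theorem evalE_shiftOne {q m j : ℕ} (hj : j < m + 1) (v : Val S) :
    evalE η χ (shiftOne S q (m+1) j) (liftV (m+1) v) = cVal (.bvar j) := by
  unfold shiftOne
  by_cases hj0 : j = 0
  · subst hj0
    simp only [if_pos rfl]
    funext π
    show liftV (m+1) v ((1 - 1) :: π) = cVal (.bvar 0) π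
    show (if 0 < m + 1 then (if π = [] then some (Tm.bvar 0) else none) else (v ((0 - (m+1)) :: π)).map (shiftTm (m+1) 0)) = _
    rw [if_pos (by omega : 0 < m + 1)]
    rfl
  · simp only [if_neg hj0]
    funext π
    show evalE η χ (.idx 1 (q + (m+1) - j)) (evalE η χ (upChain S (q + (m+1) - j) j) (liftV (m+1) v)) π = _
    rw [evalE_upChain]
    show upV j (liftV (m+1) v) ((1-1) :: π) = _
    show liftV (m+1) v ((0 + j) :: π) = _
    have : 0 + j = j := by omega
    rw [this]
    show (if j < m + 1 then (if π = [] then some (Tm.bvar j) else none) else _) = _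
    rw [if_pos hj]
    rfl

theorem evalE_liftAux (hη : ∀ x s, SEq (η x s)) (hχ : ∀ k, SEq (χ k)) {q m : ℕ} {s : ETm S} (v : Val S) :
    ∀ (m' j : ℕ), m' + j = m + 1 →
    evalE η χ (liftAux S q (m+1) s m' j) (liftV (m+1) v)
      = laV (mapV (shiftTm (m+1) 0) (evalE η χ s v)) m' j := by
  intro m'
  induction m' with
  | zero =>
      intro j _
      show evalE η χ (.comp s (upChain S q (m+1))) (liftV (m+1) v) = _
      show evalE η χ s (evalE η χ (upChain S q (m+1)) (liftV (m+1) v)) = _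
      rw [evalE_upChain, upV_liftV, evalE_shift hη hχ]
      funext π
      match π with
      | [] => rfl
      | i :: π' =>
          show mapV (shiftTm (m+1) 0) (evalE η χ s v) (i :: π')
            = if i < 0 then (if π' = [] then some (Tm.bvar (j+i)) else none)
              else mapV (shiftTm (m+1) 0) (evalE η χ s v) ((i - 0) :: π')
          rw [if_neg (by omega : ¬ i < 0), Nat.sub_zero]
  | succ m' ih =>
      intro j hmj
      show evalE η χ (.cons (shiftOne S q (m+1) j) (liftAux S q (m+1) s m' (j+1))) (liftV (m+1) v) = _
      funext π
      match π with
      | [] =>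
          show evalE η χ (liftAux S q (m+1) s m' (j+1)) (liftV (m+1) v) [] = _
          rw [ih (j+1) (by omega)]
          rfl
      | 0 :: π' =>
          show evalE η χ (shiftOne S q (m+1) j) (liftV (m+1) v) π' = _
          rw [evalE_shiftOne (by omega : j < m + 1)]
          show cVal (Tm.bvar j) π' = if 0 < m' + 1 then (if π' = [] then some (Tm.bvar (j+0)) else none) else mapV (shiftTm (m+1) 0) (evalE η χ s v) ((0 - (m'+1)) :: π')
          rw [if_pos (by omega : 0 < m' + 1), Nat.add_zero]
          rfl
      | (i+1) :: π' =>
          show evalE η χ (liftAux S q (m+1) s m' (j+1)) (liftV (m+1) v) (i :: π') = _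
          rw [ih (j+1) (by omega)]
          show laV _ m' (j+1) (i :: π') = laV _ (m'+1) j ((i+1) :: π')
          show (if i < m' then (if π' = [] then some (Tm.bvar ((j+1)+i)) else none) else _)
            = (if i + 1 < m' + 1 then (if π' = [] then some (Tm.bvar (j+(i+1))) else none) else _)
          by_cases hi : i < m'
          · rw [if_pos hi, if_pos (by omega : i + 1 < m' + 1)]
            have : (j+1)+i = j + (i+1) := by omega
            rw [this]
          · rw [if_neg hi, if_neg (by omega : ¬ i + 1 < m' + 1)]
            have : i - m' = i + 1 - (m' + 1) := by omega
            rw [this]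

theorem evalE_liftSub (hη : ∀ x s, SEq (η x s)) (hχ : ∀ k, SEq (χ k)) {q k : ℕ} {s : ETm S} (v : Val S) :
    evalE η χ (liftSub S q k s) (liftV k v) = liftV k (evalE η χ s v) := by
  match k with
  | 0 => rfl
  | m + 1 =>
      show evalE η χ (liftAux S q (m+1) s (m+1) 0) (liftV (m+1) v) = _
      rw [evalE_liftAux hη hχ v (m+1) 0 (by omega)]
      funext π
      match π with
      | [] => rfl
      | i :: π' =>
          show (if i < m+1 then (if π' = [] then some (Tm.bvar (0+i)) else none) else
              mapV (shiftTm (m+1) 0) (evalE η χ s v) ((i - (m+1)) :: π'))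
            = liftV (m+1) (evalE η χ s v) (i :: π')
          show _ = if i < m+1 then (if π' = [] then some (Tm.bvar i) else none)
            else ((evalE η χ s v) ((i - (m+1)) :: π')).map (shiftTm (m+1) 0)
          by_cases hi : i < m + 1
          · rw [if_pos hi, if_pos hi, Nat.zero_add]
          · rw [if_neg hi, if_neg hi]; rfl

/-- σ-rewriting does not change the value -/
theorem evalE_rw (hη : ∀ x s, SEq (η x s)) (hχ : ∀ k, SEq (χ k)) {t u : ETm S} (r : Rw t u) :
    ∀ v : Val S, evalE η χ t v = evalE η χ u v := by
  induction r with
  | @ridx i n _ _ =>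
      intro v
      funext π
      show v ((i + 1 - 1) :: π) = evalE η χ (.idx 1 (n-i)) (evalE η χ (upChain S (n-i) i) v) π
      rw [evalE_upChain]
      show v ((i + 1 - 1) :: π) = upV i v ((1 - 1) :: π)
      show v ((i + 1 - 1) :: π) = v ((0 + i) :: π)
      have : i + 1 - 1 = 0 + i := by omega
      rw [this]
  | rhead => intro v; rfl
  | rtid => intro v; rfl
  | rclos => intro v; rfl
  | ridl => intro v; rfl
  | rshcons =>
      intro v
      funext π
      match π with
      | [] => rfl
      | j :: π' => rfl
  | rassoc => intro v; rfl
  | rmap =>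
      intro v
      funext π
      match π with
      | [] => rfl
      | 0 :: π' => rfl
      | (j+1) :: π' => rfl
  | ridr => intro v; rfl
  | rvarsh =>
      intro v
      funext π
      match π with
      | [] => rfl
      | 0 :: π' => rfl
      | (j+1) :: π' => rfl
  | rscons =>
      intro v
      funext π
      match π with
      | [] => rfl
      | 0 :: π' => rfl
      | (j+1) :: π' => rfl
  | @rfa f p q a s _ =>
      intro v
      show cVal _ = cVal _
      refine congrArg cVal ?_
      refine congrArg (Tm.app f) ?_
      funext i
      show ((evalE η χ (a i) (liftV ((S.far f).get i) (evalE η χ s v))) []).getD (junkT S)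
        = ((evalE η χ (a i) (evalE η χ (liftSub S q ((S.far f).get i) s) (liftV ((S.far f).get i) v))) []).getD (junkT S)
      rw [evalE_liftSub hη hχ]
  | @cfa f p a i t' _ ih =>
      intro v
      refine congrArg cVal ?_
      refine congrArg (Tm.app f) ?_
      funext j
      rcases eq_or_ne j i with rfl | hne
      · rw [Function.update_self, ih]
      · rw [Function.update_of_ne hne]
  | csub₁ _ ih => intro v; show evalE η χ _ (evalE η χ _ v) = _; rw [ih]; rfl
  | @csub₂ t s s' _ ih => intro v; show evalE η χ t (evalE η χ s v) = evalE η χ t (evalE η χ s' v); rw [ih]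
  | ccons₁ _ ih =>
      intro v
      funext π
      match π with
      | [] => rfl
      | 0 :: π' => exact congrFun (ih v) π'
      | (j+1) :: π' => rfl
  | ccons₂ _ ih =>
      intro v
      funext π
      match π with
      | [] => exact congrFun (ih v) []
      | 0 :: π' => rfl
      | (j+1) :: π' => exact congrFun (ih v) (j :: π')
  | ccomp₁ _ ih => intro v; show evalE η χ _ (evalE η χ _ v) = _; rw [ih]; rfl
  | @ccomp₂ t s s' _ ih => intro v; show evalE η χ t (evalE η χ s v) = evalE η χ t (evalE η χ s' v); rw [ih]

/-- σ-conversion does not change the value -/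
theorem evalE_conv (hη : ∀ x s, SEq (η x s)) (hχ : ∀ k, SEq (χ k)) {t u : ETm S} (h : TmConv S t u) :
    ∀ v : Val S, evalE η χ t v = evalE η χ u v := by
  induction h with
  | rel a b r => exact evalE_rw hη hχ r
  | refl a => intro v; rfl
  | symm a b _ ih => intro v; exact (ih v).symm
  | trans a b c _ _ ih1 ih2 => intro v; exact (ih1 v).trans (ih2 v)


/- ########################################################################
   PART 5 : values of sorted terms
   ######################################################################## -/

/-- bound de Bruijn (binder) variables below `m` -/
def bnd : ℕ → Tm S → Prop
  | m, .bvar j => j < m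
  | _, .fvar _ => True
  | m, .app f a => ∀ i, bnd (m + (S.far f).get i) (a i)

theorem bnd_mono : ∀ (T : Tm S) {d d'}, d ≤ d' → bnd d T → bnd d' T := by
  intro T
  induction T with
  | bvar j => intro d d' h hb; exact lt_of_lt_of_le hb h
  | fvar c => intro _ _ _ _; trivial
  | app f a ih => intro d d' h hb i; exact ih i (by omega) (hb i)

theorem bnd_shift : ∀ (T : Tm S) (k d m : ℕ), bnd (d + m) T → bnd (d + m + k) (shiftTm k d T) := by
  intro T
  induction T with
  | bvar j =>
      intro k d m hb
      simp only [shiftTm]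
      by_cases h : j < d
      · rw [if_pos h]; show j < d + m + k; omega
      · rw [if_neg h]; show j + k < d + m + k; have : j < d + m := hb; omega
  | fvar c => intro k d m hb; trivial
  | app f a ih =>
      intro k d m hb i
      have := ih i k (d + (S.far f).get i) m (by
        have := hb i
        have harith : d + m + (S.far f).get i = d + (S.far f).get i + m := by omega
        rwa [harith] at this)
      have harith : d + (S.far f).get i + m + k = d + m + k + (S.far f).get i := by omega
      rwa [harith] at this

theorem shift_fix : ∀ (T : Tm S) (k d : ℕ), bnd d T → shiftTm k d T = T := by
  intro T
  induction T with
  | bvar j =>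
      intro k d hb
      have hlt : j < d := hb
      simp only [shiftTm]
      rw [if_pos hlt]
  | fvar c => intro _ _ _; rfl
  | app f a ih =>
      intro k d hb
      simp only [shiftTm]
      congr 1
      funext i
      exact ih i k _ (hb i)

/-- component of a value -/
def compV (j : ℕ) (v : Val S) : Val S := fun π => v (j :: π)

/-- the relation satisfied by values of well-sorted terms of term sort -/
def TmR (m : ℕ) (a b : Val S) : Prop :=
  (∀ π, π ≠ [] → (a π).getD (junkT S) = junkT S ∧ (b π).getD (junkT S) = junkT S) ∧
  (a []).getD (junkT S) = (b []).getD (junkT S) ∧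
  bnd m ((a []).getD (junkT S))

def envR (m c : ℕ) (v w : Val S) : Prop := ∀ j, j < c → TmR m (compV j v) (compV j w)

def envCtx : Srt → ℕ
  | .tm q => q
  | .sb n _ => n

def resR : Srt → ℕ → Val S → Val S → Prop
  | .tm _, m, a, b => TmR m a b
  | .sb _ p, m, a, b => ∀ j, j < p → TmR m (compV j a) (compV j b)

/-- semantically well-sorted environment functions -/
def GoodF (s : Srt) (φ : VFn S) : Prop :=
  SEq φ ∧ ∀ m v w, envR m (envCtx s) v w → resR s m (φ v) (φ w)

theorem shift_junk' (k d : ℕ) : shiftTm k d (junkT S) = junkT S := rfl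

theorem getD_map_shift (k d : ℕ) (x : Option (Tm S)) :
    (x.map (shiftTm k d)).getD (junkT S) = shiftTm k d (x.getD (junkT S)) := by
  cases x <;> rfl

theorem TmR_shift (k : ℕ) {m : ℕ} {a b : Val S} (h : TmR m a b) :
    TmR (m + k) (fun π => (a π).map (shiftTm k 0)) (fun π => (b π).map (shiftTm k 0)) := by
  obtain ⟨hdeep, hhead, hbnd⟩ := h
  refine ⟨?_, ?_, ?_⟩
  · intro π hπ
    obtain ⟨h1, h2⟩ := hdeep π hπ
    constructor
    · rw [getD_map_shift, h1]; rfl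
    · rw [getD_map_shift, h2]; rfl
  · rw [getD_map_shift, getD_map_shift, hhead]
  · rw [getD_map_shift]
    have : bnd (0 + m) ((a []).getD (junkT S)) := by simpa using hbnd
    have h2 := bnd_shift _ k 0 m this
    simpa using h2

/-- values of well-sorted closed terms are semantically well-sorted -/
theorem srel (hη : ∀ x s', GoodF s' (η x s')) {t : ETm S} {s : Srt} (h : HasSort [] t s) :
    ∀ (m : ℕ) (v w : Val S), envR m (envCtx s) v w →
      resR s m (evalE η χ t v) (evalE η χ t w) := by
  induction h with
  | @evar x s => intro m v w he; exact (hη x s).2 m v w he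
  | @qvar i s hs => simp at hs
  | @idx i n h1 h2 =>
      intro m v w he
      exact he (i-1) (by simp only [envCtx]; omega)
  | @fa f p a ha ih =>
      intro m v w he
      simp only [envCtx] at he
      have hcomp : ∀ i, TmR (m + (S.far f).get i)
          (evalE η χ (a i) (liftV ((S.far f).get i) v))
          (evalE η χ (a i) (liftV ((S.far f).get i) w)) := by
        intro i
        refine ih i (m + (S.far f).get i) _ _ ?_
        intro j hj
        simp only [envCtx] at hj
        match hki : (S.far f).get i with
        | 0 =>
            show TmR (m + 0) (compV j v) (compV j w)
            rw [Nat.add_zero]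
            exact he j (by omega)
        | c + 1 =>
            by_cases hjc : j < c + 1
            · have hv : compV j (liftV (c+1) v) = cVal (.bvar j) := by
                funext π
                show (if j < c+1 then (if π = [] then some (Tm.bvar j) else none)
                  else _) = cVal (.bvar j) π
                rw [if_pos hjc]; rfl
              have hw : compV j (liftV (c+1) w) = cVal (.bvar j) := by
                funext π
                show (if j < c+1 then (if π = [] then some (Tm.bvar j) else none)
                  else _) = cVal (.bvar j) π
                rw [if_pos hjc]; rfl
              rw [hv, hw]
              refine ⟨?_, rfl, ?_⟩
              · intro π hπ; simp [cVal, hπ]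
              · show bnd (m + (c+1)) ((cVal (Tm.bvar j) []).getD (junkT S))
                simp [cVal]
                show j < m + (c+1)
                omega
            · have hv : compV j (liftV (c+1) v)
                  = fun π => ((compV (j - (c+1)) v) π).map (shiftTm (c+1) 0) := by
                funext π
                show (if j < c+1 then _ else (v ((j - (c+1)) :: π)).map (shiftTm (c+1) 0)) = _
                rw [if_neg hjc]; rfl
              have hw : compV j (liftV (c+1) w)
                  = fun π => ((compV (j - (c+1)) w) π).map (shiftTm (c+1) 0) := by
                funext π
                show (if j < c+1 then _ else (w ((j - (c+1)) :: π)).map (shiftTm (c+1) 0)) = _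
                rw [if_neg hjc]; rfl
              rw [hv, hw]
              exact TmR_shift (c+1) (he (j - (c+1)) (by omega))
      refine ⟨?_, ?_, ?_⟩
      · intro π hπ; constructor <;> simp [evalE, cVal, hπ]
      · show Tm.app f (fun i => ((evalE η χ (a i) (liftV ((S.far f).get i) v)) []).getD (junkT S))
          = Tm.app f (fun i => ((evalE η χ (a i) (liftV ((S.far f).get i) w)) []).getD (junkT S))
        congr 1
        funext i
        exact (hcomp i).2.1
      · show bnd m (Tm.app f
          (fun i => ((evalE η χ (a i) (liftV ((S.far f).get i) v)) []).getD (junkT S)))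
        intro i
        exact (hcomp i).2.2
  | @sub t' s' n p h1 h2 ih1 ih2 =>
      intro m v w he
      exact ih1 m _ _ (ih2 m v w he)
  | @eid n =>
      intro m v w he
      exact fun j hj => he j hj
  | @cons t' s' n p h1 h2 ih1 ih2 =>
      intro m v w he
      intro j hj
      match j with
      | 0 =>
          have h := ih1 m v w he
          have hv : compV 0 (evalE η χ (.cons t' s') v) = evalE η χ t' v := by
            funext π; rfl
          have hw : compV 0 (evalE η χ (.cons t' s') w) = evalE η χ t' w := by
            funext π; rfl
          rw [hv, hw]; exact h
      | j + 1 =>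
          have h := ih2 m v w he (j) (by omega)
          have hv : compV (j+1) (evalE η χ (.cons t' s') v) = compV j (evalE η χ s' v) := by
            funext π; rfl
          have hw : compV (j+1) (evalE η χ (.cons t' s') w) = compV j (evalE η χ s' w) := by
            funext π; rfl
          rw [hv, hw]; exact h
  | @up n =>
      intro m v w he
      intro j hj
      have hv : compV j (evalE η χ (.up n) v) = compV (j+1) v := by funext π; rfl
      have hw : compV j (evalE η χ (.up n) w) = compV (j+1) w := by funext π; rfl
      rw [hv, hw]
      simp only [envCtx] at he
      exact he (j+1) (by omega)
  | @comp s₁ s₂ n p q h1 h2 ih1 ih2 =>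
      intro m v w he
      exact ih1 m _ _ (ih2 m v w he)

/- ### readback of values into binding-logic terms -/

def readb : ℕ → Tm S → Tm S
  | p, .bvar j => if j < p then .bvar j else .fvar 0
  | _, .fvar c => if c % 2 = 0 then .fvar (c / 2) else .fvar 0
  | p, .app f a => .app f (fun i => readb (p + (S.far f).get i) (a i))

theorem readb_WF : ∀ (T : Tm S) (p : ℕ), Tm.WF p (readb p T) := by
  intro T
  induction T with
  | bvar j =>
      intro p
      by_cases h : j < p
      · simp only [readb, if_pos h]; exact h
      · simp only [readb, if_neg h]; trivial
  | fvar c =>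
      intro p
      by_cases h : c % 2 = 0 <;> simp only [readb, h] <;> first | trivial | (split <;> trivial)
  | app f a ih => intro p i; exact ih i _

theorem readb_depth : ∀ (T : Tm S) (d p p' : ℕ), bnd d T → d ≤ p → d ≤ p' →
    readb p T = readb p' T := by
  intro T
  induction T with
  | bvar j =>
      intro d p p' hb h1 h2
      have : j < d := hb
      simp only [readb, if_pos (by omega : j < p), if_pos (by omega : j < p')]
  | fvar c => intro _ _ _ _ _ _; rfl
  | app f a ih =>
      intro d p p' hb h1 h2
      simp only [readb]
      congr 1
      funext i
      exact ih i (d + (S.far f).get i) _ _ (hb i) (by omega) (by omega)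

/-- the common head term of a semantically well-sorted closed value of sort `tm 0` -/
def headOf (φ : VFn S) : Tm S := (φ (fun _ => none) []).getD (junkT S)

theorem good_head {φ : VFn S} (h : GoodF (.tm 0) φ) (v : Val S) :
    (φ v []).getD (junkT S) = headOf φ
    ∧ (∀ π, π ≠ [] → (φ v π).getD (junkT S) = junkT S)
    ∧ bnd 0 (headOf φ) := by
  have h1 : TmR 0 (φ v) (φ (fun _ => none)) := by
    refine h.2 0 v _ ?_
    intro j hj
    simp only [envCtx] at hj
    omega
  obtain ⟨hdeep, hhead, hbnd⟩ := h1
  refine ⟨hhead, fun π hπ => (hdeep π hπ).1, ?_⟩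
  rwa [hhead] at hbnd

theorem good_const {U : Tm S} (hU : bnd 0 U) (s : Srt) : GoodF s (fun _ => cVal U) := by
  constructor
  · intro k d v
    show cVal U = mapV (shiftTm k d) (cVal U)
    rw [mapV_cVal, shift_fix U k d (bnd_mono U (by omega) hU)]
  · intro m v w _
    have hT : TmR m (cVal U) (cVal U) := by
      refine ⟨?_, rfl, ?_⟩
      · intro π hπ; simp [cVal, hπ]
      · simp [cVal]; exact bnd_mono U (by omega) hU
    match s with
    | .tm q => exact hT
    | .sb n p =>
        intro j hj
        have : compV j (cVal U) = fun _ => none := by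
          funext π; simp [compV, cVal]
        rw [this]
        exact ⟨fun π hπ => ⟨rfl, rfl⟩, rfl, trivial⟩

theorem good_wit (hη : ∀ x s', GoodF s' (η x s')) (hχ : ∀ k, SEq (χ k))
    {t : ETm S} {s : Srt} (h : HasSort [] t s) :
    GoodF s (fun v => evalE η χ t v) := by
  constructor
  · intro k d v; exact evalE_shift (fun x s' => (hη x s').1) hχ t v k d
  · intro m v w he; exact srel hη h m v w he


/- ########################################################################
   PART 6 : phase semantics over the sequent monoid
   ######################################################################## -/

/-- the commutative monoid of binding-logic contexts -/
abbrev MM (S : BSig) := Multiset (Fm S) × Multiset (Fm S)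

def Pole (m : MM S) : Prop := Deriv S m.1 m.2

def orthS (X : Set (MM S)) : Set (MM S) := {m | ∀ y ∈ X, Pole (y + m)}

def ooS (X : Set (MM S)) : Set (MM S) := orthS (orthS X)

theorem orth_anti {X Y : Set (MM S)} (h : X ⊆ Y) : orthS Y ⊆ orthS X :=
  fun m hm y hy => hm y (h hy)

theorem subset_oo (X : Set (MM S)) : X ⊆ ooS X := by
  intro x hx n hn
  have := hn x hx
  rwa [add_comm] at this

theorem orth_oo (X : Set (MM S)) : orthS (ooS X) = orthS X := by
  apply Set.Subset.antisymm
  · exact orth_anti (subset_oo X)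
  · intro m hm y hy
    have := hy m hm
    rwa [add_comm] at this

/-- `Fact X` : `X` is biorthogonally closed -/
def FactS (X : Set (MM S)) : Prop := ooS X ⊆ X

theorem fact_oo (X : Set (MM S)) : FactS (ooS X) := by
  intro m hm y hy
  exact hm y (by rw [orth_oo]; exact hy)

theorem fact_orth (X : Set (MM S)) : FactS (orthS X) := by
  intro m hm
  have h2 : m ∈ orthS (ooS X) := hm
  rwa [orth_oo] at h2

theorem fact_iInter {ι : Sort*} {X : ι → Set (MM S)} (h : ∀ i, FactS (X i)) :
    FactS (⋂ i, X i) := by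
  intro m hm
  refine Set.mem_iInter.2 (fun i => h i ?_)
  exact fun y hy => hm y (orth_anti (Set.iInter_subset X i) hy)

theorem mem_oo_of_orth {X : Set (MM S)} {m : MM S} (h : ∀ n ∈ orthS X, Pole (m + n)) :
    m ∈ ooS X := by
  intro y hy
  have := h y hy
  rwa [add_comm] at this

theorem pole_of_oo_orth {X : Set (MM S)} {m n : MM S} (hm : m ∈ ooS X) (hn : n ∈ orthS X) :
    Pole (m + n) := by
  have := hm n hn
  rwa [add_comm] at this

/- ### structural closure of the pole -/

theorem deriv_weakL_many {Γ Δ : Multiset (Fm S)} (Γ₀ : Multiset (Fm S)) (h : Deriv S Γ Δ) :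
    Deriv S (Γ₀ + Γ) Δ := by
  induction Γ₀ using Multiset.induction_on with
  | empty => simpa using h
  | cons a Γ₀ ih => rw [Multiset.cons_add]; exact Deriv.weakL ih

theorem deriv_weakR_many {Γ Δ : Multiset (Fm S)} (Δ₀ : Multiset (Fm S)) (h : Deriv S Γ Δ) :
    Deriv S Γ (Δ₀ + Δ) := by
  induction Δ₀ using Multiset.induction_on with
  | empty => simpa using h
  | cons a Δ₀ ih => rw [Multiset.cons_add]; exact Deriv.weakR ih

theorem pole_weak {m : MM S} (w : MM S) (h : Pole m) : Pole (w + m) := by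
  show Deriv S (w.1 + m.1) (w.2 + m.2)
  exact deriv_weakR_many _ (deriv_weakL_many _ h)

theorem deriv_contrL_many {Γ Γ₀ Δ : Multiset (Fm S)} (h : Deriv S (Γ + Γ + Γ₀) Δ) :
    Deriv S (Γ + Γ₀) Δ := by
  induction Γ using Multiset.induction_on generalizing Γ₀ with
  | empty => simpa using h
  | cons a Γ ih =>
      have e1 : (a ::ₘ Γ) + (a ::ₘ Γ) + Γ₀ = a ::ₘ (a ::ₘ (Γ + Γ + Γ₀)) := by
        simp [Multiset.cons_add, Multiset.add_cons, Multiset.cons_swap]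
      rw [e1] at h
      have h2 := Deriv.contrL h
      have e2 : a ::ₘ (Γ + Γ + Γ₀) = Γ + Γ + (a ::ₘ Γ₀) := by
        simp [Multiset.cons_add, Multiset.add_cons]
      rw [e2] at h2
      have h3 := ih h2
      have e3 : Γ + (a ::ₘ Γ₀) = (a ::ₘ Γ) + Γ₀ := by
        simp [Multiset.cons_add, Multiset.add_cons]
      rwa [e3] at h3

theorem deriv_contrR_many {Γ Δ Δ₀ : Multiset (Fm S)} (h : Deriv S Γ (Δ + Δ + Δ₀)) :
    Deriv S Γ (Δ + Δ₀) := by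
  induction Δ using Multiset.induction_on generalizing Δ₀ with
  | empty => simpa using h
  | cons a Δ ih =>
      have e1 : (a ::ₘ Δ) + (a ::ₘ Δ) + Δ₀ = a ::ₘ (a ::ₘ (Δ + Δ + Δ₀)) := by
        simp [Multiset.cons_add, Multiset.add_cons, Multiset.cons_swap]
      rw [e1] at h
      have h2 := Deriv.contrR h
      have e2 : a ::ₘ (Δ + Δ + Δ₀) = Δ + Δ + (a ::ₘ Δ₀) := by
        simp [Multiset.cons_add, Multiset.add_cons]
      rw [e2] at h2
      have h3 := ih h2
      have e3 : Δ + (a ::ₘ Δ₀) = (a ::ₘ Δ) + Δ₀ := by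
        simp [Multiset.cons_add, Multiset.add_cons]
      rwa [e3] at h3

theorem pole_contr {x y : MM S} (h : Pole (x + x + y)) : Pole (x + y) := by
  show Deriv S (x.1 + y.1) (x.2 + y.2)
  exact deriv_contrR_many (deriv_contrL_many h)


/- ### interpretation of L' propositions -/

/-- quantifier assignment read off a stack `L` with default `φs` -/
def chiL (L : List (VFn S)) (φs : VFn S) : ℕ → VFn S := fun i => L.getD i φs

/-- the decoding environment -/
def vB : Val S := fun π =>
  match π with
  | [j] => some (.bvar j)
  | _ => none

/-- decode of an atom argument -/
def decA (η : ℕ → Srt → VFn S) (χ : ℕ → VFn S) (p : ℕ) (e : ETm S) : Tm S :=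
  readb p ((evalE η χ e vB []).getD (junkT S))

/-- interpretation of a proposition of L' relative to a stack of quantifier values -/
def interp (η : ℕ → Srt → VFn S) (φs : VFn S) : EFm S → List (VFn S) → Set (MM S)
  | .atom P a, L =>
      ooS {(({Fm.atom P (fun i => decA η (chiL L φs) ((S.par P).get i) (a i))} :
        Multiset (Fm S)), (0 : Multiset (Fm S)))}
  | .imp A B, L =>
      orthS {x | ∃ lA ∈ interp η φs A L, ∃ rB ∈ orthS (interp η φs B L), x = lA + rB}
  | .conj A B, L =>
      ooS {x | ∃ lA ∈ interp η φs A L, ∃ lB ∈ interp η φs B L, x = lA + lB}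
  | .disj A B, L =>
      orthS {x | ∃ rA ∈ orthS (interp η φs A L), ∃ rB ∈ orthS (interp η φs B L), x = rA + rB}
  | .bot, _ => ooS {(({Fm.bot} : Multiset (Fm S)), (0 : Multiset (Fm S)))}
  | .all s A, L => ⋂ φ : {φ : VFn S // GoodF s φ}, interp η φs A (φ.1 :: L)
  | .ex s A, L => ooS (⋃ φ : {φ : VFn S // GoodF s φ}, interp η φs A (φ.1 :: L))

theorem interp_fact (η : ℕ → Srt → VFn S) (φs : VFn S) :
    ∀ (A : EFm S) (L : List (VFn S)), FactS (interp η φs A L) := by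
  intro A
  induction A with
  | atom P a => intro L; exact fact_oo _
  | imp A B ihA ihB => intro L; exact fact_orth _
  | conj A B ihA ihB => intro L; exact fact_oo _
  | disj A B ihA ihB => intro L; exact fact_orth _
  | bot => intro L; exact fact_oo _
  | all s A ih => intro L; exact fact_iInter (fun φ => ih (φ.1 :: L))
  | ex s A ih => intro L; exact fact_oo _

theorem chiL_SEq {L : List (VFn S)} {φs : VFn S} (hL : ∀ φ ∈ L, SEq φ) (hφ : SEq φs) :
    ∀ i, SEq (chiL L φs i) := by
  intro i
  show SEq (L.getD i φs)
  rcases lt_or_ge i L.length with h | h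
  · rw [List.getD_eq_getElem _ _ h]
    exact hL _ (List.getElem_mem h)
  · rw [List.getD_eq_default _ _ h]
    exact hφ

/-- FConv-invariance of the interpretation -/
theorem interp_conv {η : ℕ → Srt → VFn S} {φs : VFn S}
    (Hη : ∀ x s, SEq (η x s)) (Hφ : SEq φs) {A B : EFm S} (h : FConv A B) :
    ∀ L : List (VFn S), (∀ φ ∈ L, SEq φ) → interp η φs A L = interp η φs B L := by
  induction h with
  | @atom P a b hab =>
      intro L hL
      show ooS _ = ooS _
      have hat : (fun i => decA η (chiL L φs) ((S.par P).get i) (a i))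
          = (fun i => decA η (chiL L φs) ((S.par P).get i) (b i)) := by
        funext i
        unfold decA
        rw [evalE_conv Hη (chiL_SEq hL Hφ) (hab i) vB]
      rw [hat]
  | imp _ _ ih1 ih2 => intro L hL; show orthS _ = orthS _; rw [ih1 L hL, ih2 L hL]
  | conj _ _ ih1 ih2 => intro L hL; show ooS _ = ooS _; rw [ih1 L hL, ih2 L hL]
  | disj _ _ ih1 ih2 => intro L hL; show orthS _ = orthS _; rw [ih1 L hL, ih2 L hL]
  | bot => intro L hL; rfl
  | @all s A A' _ ih =>
      intro L hL
      show (⋂ φ : {φ : VFn S // GoodF s φ}, _) = ⋂ φ : {φ : VFn S // GoodF s φ}, _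
      refine Set.iInter_congr (fun (φ : {φ : VFn S // GoodF s φ}) => ih (φ.1 :: L) ?_)
      intro ψ hψ
      rcases List.mem_cons.1 hψ with h | h
      · exact h ▸ φ.2.1
      · exact hL ψ h
  | @ex s A A' _ ih =>
      intro L hL
      refine congrArg ooS ?_
      refine Set.iUnion_congr (fun (φ : {φ : VFn S // GoodF s φ}) => ih (φ.1 :: L) ?_)
      intro ψ hψ
      rcases List.mem_cons.1 hψ with h | h
      · exact h ▸ φ.2.1
      · exact hL ψ h

/-- terms without quantifier variables -/
def noQv : ETm S → Prop
  | .qvar _ => False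
  | .evar _ _ => True
  | .idx _ _ => True
  | .fa _ _ a => ∀ i, noQv (a i)
  | .sub t s => noQv t ∧ noQv s
  | .eid _ => True
  | .cons t s => noQv t ∧ noQv s
  | .up _ => True
  | .comp t s => noQv t ∧ noQv s

theorem sorted_noQv : ∀ {t : ETm S} {Θ s}, HasSort Θ t s → Θ = [] → noQv t := by
  intro t Θ s h
  induction h with
  | evar => intro _; trivial
  | @qvar i s hs => intro hΘ; subst hΘ; simp at hs
  | idx _ _ => intro _; trivial
  | fa _ ih => intro hΘ; exact fun i => ih i hΘ
  | sub _ _ ih1 ih2 => intro hΘ; exact ⟨ih1 hΘ, ih2 hΘ⟩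
  | eid => intro _; trivial
  | cons _ _ ih1 ih2 => intro hΘ; exact ⟨ih1 hΘ, ih2 hΘ⟩
  | up => intro _; trivial
  | comp _ _ ih1 ih2 => intro hΘ; exact ⟨ih1 hΘ, ih2 hΘ⟩

/-- evaluation of quantifier-free terms does not depend on χ -/
theorem evalE_chi_irrel {η : ℕ → Srt → VFn S} {χ χ' : ℕ → VFn S} :
    ∀ {e : ETm S}, noQv e → ∀ v, evalE η χ e v = evalE η χ' e v := by
  intro e
  induction e with
  | evar x s => intro _ v; rfl
  | qvar k => intro h v; exact absurd h (by simp [noQv])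
  | idx i n => intro _ v; rfl
  | fa f p a ih =>
      intro h v
      refine congrArg cVal (congrArg (Tm.app f) (funext fun i => ?_))
      rw [ih i (h i)]
  | sub t s iht ihs =>
      intro h v
      obtain ⟨h1, h2⟩ : noQv t ∧ noQv s := h
      show evalE η χ t (evalE η χ s v) = evalE η χ' t (evalE η χ' s v)
      rw [ihs h2, iht h1]
  | eid n => intro _ v; rfl
  | cons t s iht ihs =>
      intro h v
      obtain ⟨h1, h2⟩ : noQv t ∧ noQv s := h
      funext π
      match π with
      | [] => show evalE η χ s v [] = evalE η χ' s v []; rw [ihs h2]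
      | 0 :: π' => show evalE η χ t v π' = evalE η χ' t v π'; rw [iht h1]
      | (j+1) :: π' => show evalE η χ s v (j::π') = evalE η χ' s v (j::π'); rw [ihs h2]
  | up n => intro _ v; rfl
  | comp t s iht ihs =>
      intro h v
      obtain ⟨h1, h2⟩ : noQv t ∧ noQv s := h
      show evalE η χ t (evalE η χ s v) = evalE η χ' t (evalE η χ' s v)
      rw [ihs h2, iht h1]

/-- evaluation depends on η only through the named free variables -/
theorem evalE_eta_irrel {η η' : ℕ → Srt → VFn S} {χ : ℕ → VFn S} :
    ∀ {e : ETm S}, (∀ y ∈ e.fvs, η y = η' y) → ∀ v, evalE η χ e v = evalE η' χ e v := by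
  intro e
  induction e with
  | evar x s =>
      intro h v
      show η x s v = η' x s v
      rw [h x (by simp [ETm.fvs])]
  | qvar k => intro _ v; rfl
  | idx i n => intro _ v; rfl
  | fa f p a ih =>
      intro h v
      refine congrArg cVal (congrArg (Tm.app f) (funext fun i => ?_))
      rw [ih i (fun y hy => h y (by
        show y ∈ ⋃ i, (a i).fvs
        exact Set.mem_iUnion.2 ⟨i, hy⟩))]
  | sub t s iht ihs =>
      intro h v
      show evalE η χ t (evalE η χ s v) = evalE η' χ t (evalE η' χ s v)
      rw [ihs (fun y hy => h y (Set.mem_union_right _ hy)),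
        iht (fun y hy => h y (Set.mem_union_left _ hy))]
  | eid n => intro _ v; rfl
  | cons t s iht ihs =>
      intro h v
      funext π
      match π with
      | [] => show evalE η χ s v [] = evalE η' χ s v []
              rw [ihs (fun y hy => h y (Set.mem_union_right _ hy))]
      | 0 :: π' => show evalE η χ t v π' = evalE η' χ t v π'
                   rw [iht (fun y hy => h y (Set.mem_union_left _ hy))]
      | (j+1) :: π' => show evalE η χ s v (j::π') = evalE η' χ s v (j::π')
                       rw [ihs (fun y hy => h y (Set.mem_union_right _ hy))]
  | up n => intro _ v; rfl
  | comp t s iht ihs =>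
      intro h v
      show evalE η χ t (evalE η χ s v) = evalE η' χ t (evalE η' χ s v)
      rw [ihs (fun y hy => h y (Set.mem_union_right _ hy)),
        iht (fun y hy => h y (Set.mem_union_left _ hy))]

theorem interp_eta_irrel {η η' : ℕ → Srt → VFn S} {φs : VFn S} :
    ∀ {A : EFm S}, (∀ y ∈ A.fvs, η y = η' y) → ∀ L, interp η φs A L = interp η' φs A L := by
  intro A
  induction A with
  | atom P a =>
      intro h L
      show ooS _ = ooS _
      have hat : (fun i => decA η (chiL L φs) ((S.par P).get i) (a i))
          = (fun i => decA η' (chiL L φs) ((S.par P).get i) (a i)) := by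
        funext i
        unfold decA
        rw [evalE_eta_irrel (fun y hy => h y (by
          show y ∈ ⋃ i, (a i).fvs
          exact Set.mem_iUnion.2 ⟨i, hy⟩)) vB]
      rw [hat]
  | imp A B ih1 ih2 =>
      intro h L
      show orthS _ = orthS _
      rw [ih1 (fun y hy => h y (Set.mem_union_left _ hy)) L,
        ih2 (fun y hy => h y (Set.mem_union_right _ hy)) L]
  | conj A B ih1 ih2 =>
      intro h L
      show ooS _ = ooS _
      rw [ih1 (fun y hy => h y (Set.mem_union_left _ hy)) L,
        ih2 (fun y hy => h y (Set.mem_union_right _ hy)) L]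
  | disj A B ih1 ih2 =>
      intro h L
      show orthS _ = orthS _
      rw [ih1 (fun y hy => h y (Set.mem_union_left _ hy)) L,
        ih2 (fun y hy => h y (Set.mem_union_right _ hy)) L]
  | bot => intro _ _; rfl
  | all s A ih =>
      intro h L
      exact Set.iInter_congr (fun (φ : {φ : VFn S // GoodF s φ}) => ih h (φ.1 :: L))
  | ex s A ih =>
      intro h L
      refine congrArg ooS ?_
      exact Set.iUnion_congr (fun (φ : {φ : VFn S // GoodF s φ}) => ih h (φ.1 :: L))

/- ### the substitution property -/

theorem getD_append_lt {α : Type*} (L : List α) (x d : α) {i : ℕ} (h : i < L.length) :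
    (L ++ [x]).getD i d = L.getD i d := by
  rw [List.getD_eq_getElem _ _ (by simp; omega), List.getD_eq_getElem _ _ h]
  exact List.getElem_append_left h

theorem getD_append_len {α : Type*} (L : List α) (x d : α) :
    (L ++ [x]).getD L.length d = x := by
  rw [List.getD_eq_getElem _ _ (by simp)]
  simp

theorem getD_append_gt {α : Type*} (L : List α) (x d : α) {i : ℕ} (h : L.length < i) :
    (L ++ [x]).getD i d = d := by
  rw [List.getD_eq_default]
  simp
  omega

/-- substitution of a quantifier variable, term level -/
theorem evalE_open {η : ℕ → Srt → VFn S} {φs : VFn S} {u : ETm S} (hu : noQv u)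
    (ψ : VFn S) (hψ : ∀ L v, evalE η (chiL L φs) u v = ψ v) :
    ∀ (e : ETm S) (L : List (VFn S)) (v : Val S),
      evalE η (chiL L φs) (ETm.openE u L.length e) v
        = evalE η (chiL (L ++ [ψ]) φs) e v := by
  intro e
  induction e with
  | evar x s => intro L v; rfl
  | qvar k =>
      intro L v
      by_cases hk : k = L.length
      · subst hk
        have he : ETm.openE u L.length (ETm.qvar (S := S) L.length) = u := by
          simp [ETm.openE]
        rw [he, hψ L v]
        show ψ v = (L ++ [ψ]).getD L.length φs v
        rw [getD_append_len]
      · have he : ETm.openE u L.length (ETm.qvar k) = ETm.qvar k := by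
          simp [ETm.openE, hk]
        rw [he]
        show chiL L φs k v = chiL (L ++ [ψ]) φs k v
        unfold chiL
        rcases lt_or_ge k L.length with h | h
        · rw [getD_append_lt _ _ _ h]
        · have hgt : L.length < k := by omega
          rw [getD_append_gt _ _ _ hgt, List.getD_eq_default _ _ (by omega)]
  | idx i n => intro L v; rfl
  | fa f p a ih =>
      intro L v
      refine congrArg cVal (congrArg (Tm.app f) (funext fun i => ?_))
      rw [ih i L]
  | sub t s iht ihs =>
      intro L v
      show evalE η (chiL L φs) (ETm.openE u L.length t)
          (evalE η (chiL L φs) (ETm.openE u L.length s) v) = _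
      rw [ihs L, iht L]
      rfl
  | eid n => intro L v; rfl
  | cons t s iht ihs =>
      intro L v
      funext π
      match π with
      | [] => show evalE η (chiL L φs) (ETm.openE u L.length s) v [] = _; rw [ihs L]; rfl
      | 0 :: π' => show evalE η (chiL L φs) (ETm.openE u L.length t) v π' = _; rw [iht L]; rfl
      | (j+1) :: π' => show evalE η (chiL L φs) (ETm.openE u L.length s) v (j::π') = _
                       rw [ihs L]; rfl
  | up n => intro L v; rfl
  | comp t s iht ihs =>
      intro L v
      show evalE η (chiL L φs) (ETm.openE u L.length t)
          (evalE η (chiL L φs) (ETm.openE u L.length s) v) = _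
      rw [ihs L, iht L]
      rfl


/-- substitution of a quantifier variable, proposition level -/
theorem interp_open {η : ℕ → Srt → VFn S} {φs : VFn S} {u : ETm S} (hu : noQv u)
    (ψ : VFn S) (hψ : ∀ (χ : ℕ → VFn S) v, evalE η χ u v = ψ v) :
    ∀ (A : EFm S) (L : List (VFn S)),
      interp η φs (EFm.openF u L.length A) L = interp η φs A (L ++ [ψ]) := by
  intro A
  induction A with
  | atom P a =>
      intro L
      show ooS _ = ooS _
      have hat : (fun i => decA η (chiL L φs) ((S.par P).get i) (ETm.openE u L.length (a i)))
          = (fun i => decA η (chiL (L ++ [ψ]) φs) ((S.par P).get i) (a i)) := by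
        funext i
        unfold decA
        rw [evalE_open hu ψ (fun L' v => hψ (chiL L' φs) v) (a i) L vB]
      rw [hat]
  | imp A B ih1 ih2 => intro L; show orthS _ = orthS _; rw [ih1 L, ih2 L]
  | conj A B ih1 ih2 => intro L; show ooS _ = ooS _; rw [ih1 L, ih2 L]
  | disj A B ih1 ih2 => intro L; show orthS _ = orthS _; rw [ih1 L, ih2 L]
  | bot => intro L; rfl
  | all s A ih =>
      intro L
      show (⋂ φ : {φ : VFn S // GoodF s φ}, _) = ⋂ φ : {φ : VFn S // GoodF s φ}, _
      refine Set.iInter_congr (fun (φ : {φ : VFn S // GoodF s φ}) => ?_)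
      have := ih (φ.1 :: L)
      simpa using this
  | ex s A ih =>
      intro L
      refine congrArg ooS ?_
      refine Set.iUnion_congr (fun (φ : {φ : VFn S // GoodF s φ}) => ?_)
      have := ih (φ.1 :: L)
      simpa using this

/- ### updates of the named-variable assignment -/

def updEta (η : ℕ → Srt → VFn S) (x : ℕ) (s : Srt) (φ : VFn S) : ℕ → Srt → VFn S :=
  fun y s' => if y = x ∧ s' = s then φ else η y s'

theorem updEta_good {η : ℕ → Srt → VFn S} {x s φ} (Hη : ∀ y s', GoodF s' (η y s'))
    (hφ : GoodF s φ) : ∀ y s', GoodF s' (updEta η x s φ y s') := by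
  intro y s'
  unfold updEta
  by_cases h : y = x ∧ s' = s
  · rw [if_pos h]; rw [h.2]; exact hφ
  · rw [if_neg h]; exact Hη y s'

theorem updEta_self {η : ℕ → Srt → VFn S} {x s φ} : updEta η x s φ x s = φ := by
  unfold updEta; rw [if_pos ⟨rfl, rfl⟩]

theorem updEta_ne {η : ℕ → Srt → VFn S} {x s φ} {y : ℕ} (h : y ≠ x) :
    updEta η x s φ y = η y := by
  funext s'
  unfold updEta
  rw [if_neg (by tauto)]

/- ### choices of interpretants for a context -/

inductive PickL (η : ℕ → Srt → VFn S) (φs : VFn S) : Multiset (EFm S) → MM S → Prop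
  | nil : PickL η φs 0 0
  | cons {A Γ m w} : m ∈ interp η φs A [] → PickL η φs Γ w → PickL η φs (A ::ₘ Γ) (m + w)

inductive PickR (η : ℕ → Srt → VFn S) (φs : VFn S) : Multiset (EFm S) → MM S → Prop
  | nil : PickR η φs 0 0
  | cons {A Δ n w} : n ∈ orthS (interp η φs A []) → PickR η φs Δ w → PickR η φs (A ::ₘ Δ) (n + w)

theorem pickL_zero {η φs w} (h : PickL (S := S) η φs 0 w) : w = 0 := by
  have key : ∀ X w', PickL (S := S) η φs X w' → X = 0 → w' = 0 := by
    intro X w' h'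
    induction h' with
    | nil => intro _; rfl
    | cons _ _ _ => intro hX; exact absurd hX Multiset.cons_ne_zero
  exact key _ _ h rfl

theorem pickR_zero {η φs w} (h : PickR (S := S) η φs 0 w) : w = 0 := by
  have key : ∀ X w', PickR (S := S) η φs X w' → X = 0 → w' = 0 := by
    intro X w' h'
    induction h' with
    | nil => intro _; rfl
    | cons _ _ _ => intro hX; exact absurd hX Multiset.cons_ne_zero
  exact key _ _ h rfl

theorem pickL_cons_inv {η φs X w} (h : PickL (S := S) η φs X w) :
    ∀ A Γ, X = A ::ₘ Γ →
      ∃ m w', m ∈ interp η φs A [] ∧ PickL η φs Γ w' ∧ w = m + w' := by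
  induction h with
  | nil => intro A Γ h; exact absurd h.symm (Multiset.cons_ne_zero)
  | @cons A' Γ' m w' hm hp ih =>
      intro A Γ heq
      rcases Multiset.cons_eq_cons.1 heq.symm with ⟨h1, h2⟩ | ⟨hne, cs, h1, h2⟩
      · subst h1; subst h2; exact ⟨m, w', hm, hp, rfl⟩
      · obtain ⟨m₂, w₂, hm₂, hp₂, rfl⟩ := ih A cs h2
        refine ⟨m₂, m + w₂, hm₂, ?_, by abel⟩
        rw [h1]
        exact PickL.cons hm hp₂

theorem pickR_cons_inv {η φs X w} (h : PickR (S := S) η φs X w) :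
    ∀ A Δ, X = A ::ₘ Δ →
      ∃ n w', n ∈ orthS (interp η φs A []) ∧ PickR η φs Δ w' ∧ w = n + w' := by
  induction h with
  | nil => intro A Δ h; exact absurd h.symm (Multiset.cons_ne_zero)
  | @cons A' Δ' n w' hn hp ih =>
      intro A Δ heq
      rcases Multiset.cons_eq_cons.1 heq.symm with ⟨h1, h2⟩ | ⟨hne, cs, h1, h2⟩
      · subst h1; subst h2; exact ⟨n, w', hn, hp, rfl⟩
      · obtain ⟨n₂, w₂, hn₂, hp₂, rfl⟩ := ih A cs h2
        refine ⟨n₂, n + w₂, hn₂, ?_, by abel⟩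
        rw [h1]
        exact PickR.cons hn hp₂

theorem pickL_congr {η η' φs} {Γ : Multiset (EFm S)} {w}
    (h : ∀ A ∈ Γ, interp η φs A [] = interp η' φs A [])
    (p : PickL η φs Γ w) : PickL η' φs Γ w := by
  induction p with
  | nil => exact PickL.nil
  | @cons A Γ' m w' hm hp ih =>
      exact PickL.cons (by rw [← h A (Multiset.mem_cons_self A Γ')]; exact hm)
        (ih (fun B hB => h B (Multiset.mem_cons_of_mem hB)))

theorem pickR_congr {η η' φs} {Δ : Multiset (EFm S)} {w}
    (h : ∀ A ∈ Δ, interp η φs A [] = interp η' φs A [])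
    (p : PickR η φs Δ w) : PickR η' φs Δ w := by
  induction p with
  | nil => exact PickR.nil
  | @cons A Δ' n w' hn hp ih =>
      exact PickR.cons (by rw [← h A (Multiset.mem_cons_self A Δ')]; exact hn)
        (ih (fun B hB => h B (Multiset.mem_cons_of_mem hB)))


/- ### soundness of sequent calculus modulo in the phase model -/

theorem soundness {φs : VFn S} (Hφ : SEq φs) {nd : ℕ} {Γh Δh : Multiset (EFm S)}
    (d : DerivM FConv nd Γh Δh) :
    ∀ (η : ℕ → Srt → VFn S), (∀ x s, GoodF s (η x s)) →
    ∀ w₁ w₂, PickL η φs Γh w₁ → PickR η φs Δh w₂ → Pole (w₁ + w₂) := by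
  induction d with
  | @ax A B hAB =>
      intro η Hη w₁ w₂ p₁ p₂
      obtain ⟨m, w₁', hm, p₁', rfl⟩ := pickL_cons_inv p₁ A 0 rfl
      obtain ⟨nn, w₂', hn, p₂', rfl⟩ := pickR_cons_inv p₂ B 0 rfl
      rw [pickL_zero p₁', pickR_zero p₂']
      have hI : interp η φs A [] = interp η φs B [] :=
        interp_conv (fun x s => (Hη x s).1) Hφ hAB [] (by simp)
      rw [hI] at hm
      have hp := hn m hm
      have e : (m + 0) + (nn + 0) = m + nn := by abel
      rw [e]
      exact hp
  | @cut n1 n2 Γ Δ A B hAB d1 d2 ih1 ih2 =>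
      intro η Hη w₁ w₂ p₁ p₂
      have hI : interp η φs A [] = interp η φs B [] :=
        interp_conv (fun x s => (Hη x s).1) Hφ hAB [] (by simp)
      have hwA : (w₁ + w₂) ∈ orthS (interp η φs A []) := by
        intro y hy
        have h := ih1 η Hη (y + w₁) w₂ (PickL.cons hy p₁) p₂
        have e : (y + w₁) + w₂ = y + (w₁ + w₂) := by abel
        rwa [e] at h
      have h2 := ih2 η Hη w₁ ((w₁ + w₂) + w₂) p₁ (PickR.cons (by rw [← hI]; exact hwA) p₂)
      have e2 : w₁ + ((w₁ + w₂) + w₂) = (w₁ + w₂) + (w₁ + w₂) + 0 := by abel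
      rw [e2] at h2
      have h3 := pole_contr h2
      simpa using h3
  | @contrL n1 Γ Δ A B₁ B₂ h1 h2 d1 ih =>
      intro η Hη w₁ w₂ p₁ p₂
      obtain ⟨m, w, hm, p', rfl⟩ := pickL_cons_inv p₁ A _ rfl
      have e1 : interp η φs A [] = interp η φs B₁ [] :=
        interp_conv (fun x s => (Hη x s).1) Hφ h1 [] (by simp)
      have e2 : interp η φs A [] = interp η φs B₂ [] :=
        interp_conv (fun x s => (Hη x s).1) Hφ h2 [] (by simp)
      have h := ih η Hη (m + (m + w)) w₂
        (PickL.cons (e1 ▸ hm) (PickL.cons (e2 ▸ hm) p')) p₂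
      have e : (m + (m + w)) + w₂ = m + m + (w + w₂) := by abel
      rw [e] at h
      have h3 := pole_contr h
      have e' : m + (w + w₂) = (m + w) + w₂ := by abel
      rwa [e'] at h3
  | @contrR n1 Γ Δ A B₁ B₂ h1 h2 d1 ih =>
      intro η Hη w₁ w₂ p₁ p₂
      obtain ⟨nn, w, hn, p', rfl⟩ := pickR_cons_inv p₂ A _ rfl
      have e1 : interp η φs A [] = interp η φs B₁ [] :=
        interp_conv (fun x s => (Hη x s).1) Hφ h1 [] (by simp)
      have e2 : interp η φs A [] = interp η φs B₂ [] :=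
        interp_conv (fun x s => (Hη x s).1) Hφ h2 [] (by simp)
      have h := ih η Hη w₁ (nn + (nn + w)) p₁
        (PickR.cons (e1 ▸ hn) (PickR.cons (e2 ▸ hn) p'))
      have e : w₁ + (nn + (nn + w)) = nn + nn + (w₁ + w) := by abel
      rw [e] at h
      have h3 := pole_contr h
      have e' : nn + (w₁ + w) = w₁ + (nn + w) := by abel
      rwa [e'] at h3
  | @weakL n1 Γ Δ A d1 ih =>
      intro η Hη w₁ w₂ p₁ p₂
      obtain ⟨m, w, hm, p', rfl⟩ := pickL_cons_inv p₁ A _ rfl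
      have h := ih η Hη w w₂ p' p₂
      have h2 := pole_weak m h
      have e : m + (w + w₂) = (m + w) + w₂ := by abel
      rwa [e] at h2
  | @weakR n1 Γ Δ A d1 ih =>
      intro η Hη w₁ w₂ p₁ p₂
      obtain ⟨nn, w, hn, p', rfl⟩ := pickR_cons_inv p₂ A _ rfl
      have h := ih η Hη w₁ w p₁ p'
      have h2 := pole_weak nn h
      have e : nn + (w₁ + w) = w₁ + (nn + w) := by abel
      rwa [e] at h2
  | @impL n1 n2 Γ Δ C A B hC d1 d2 ih1 ih2 =>
      intro η Hη w₁ w₂ p₁ p₂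
      obtain ⟨m, w, hm, p', rfl⟩ := pickL_cons_inv p₁ C _ rfl
      have hA : (w + w₂) ∈ interp η φs A [] := by
        apply interp_fact
        refine mem_oo_of_orth ?_
        intro nA hnA
        have h := ih1 η Hη w (nA + w₂) p' (PickR.cons hnA p₂)
        have e : w + (nA + w₂) = (w + w₂) + nA := by abel
        rwa [e] at h
      have hB : (w + w₂) ∈ orthS (interp η φs B []) := by
        intro lB hlB
        have h := ih2 η Hη (lB + w) w₂ (PickL.cons hlB p') p₂
        have e : (lB + w) + w₂ = lB + (w + w₂) := by abel
        rwa [e] at h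
      have hCI : interp η φs C [] = interp η φs (.imp A B) [] :=
        interp_conv (fun x s => (Hη x s).1) Hφ hC [] (by simp)
      rw [hCI] at hm
      have h := hm ((w + w₂) + (w + w₂)) ⟨_, hA, _, hB, rfl⟩
      have e : ((w + w₂) + (w + w₂)) + m = (w + w₂) + (w + w₂) + m := by abel
      rw [e] at h
      have h2 := pole_contr h
      have e' : (w + w₂) + m = (m + w) + w₂ := by abel
      rwa [e'] at h2
  | @impR n1 Γ Δ C A B hC d1 ih =>
      intro η Hη w₁ w₂ p₁ p₂
      obtain ⟨nn, w, hn, p', rfl⟩ := pickR_cons_inv p₂ C _ rfl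
      have hCI : interp η φs C [] = interp η φs (.imp A B) [] :=
        interp_conv (fun x s => (Hη x s).1) Hφ hC [] (by simp)
      rw [hCI] at hn
      have hu : (w₁ + w) ∈ {x | ∃ lA ∈ interp η φs A [],
          ∃ rB ∈ orthS (interp η φs B []), x = lA + rB} → False → True := fun _ _ => trivial
      have hw : (w₁ + w) ∈ orthS {x | ∃ lA ∈ interp η φs A [],
          ∃ rB ∈ orthS (interp η φs B []), x = lA + rB} := by
        rintro y ⟨lA, hlA, rB, hrB, rfl⟩
        have h := ih η Hη (lA + w₁) (rB + w) (PickL.cons hlA p₁) (PickR.cons hrB p')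
        have e : (lA + w₁) + (rB + w) = (lA + rB) + (w₁ + w) := by abel
        rwa [e] at h
      have h := hn (w₁ + w) hw
      have e : (w₁ + w) + nn = w₁ + (nn + w) := by abel
      rwa [e] at h
  | @conjL n1 Γ Δ C A B hC d1 ih =>
      intro η Hη w₁ w₂ p₁ p₂
      obtain ⟨m, w, hm, p', rfl⟩ := pickL_cons_inv p₁ C _ rfl
      have hCI : interp η φs C [] = interp η φs (.conj A B) [] :=
        interp_conv (fun x s => (Hη x s).1) Hφ hC [] (by simp)
      rw [hCI] at hm
      have hw : (w + w₂) ∈ orthS {x | ∃ lA ∈ interp η φs A [],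
          ∃ lB ∈ interp η φs B [], x = lA + lB} := by
        rintro y ⟨lA, hlA, lB, hlB, rfl⟩
        have h := ih η Hη (lA + (lB + w)) w₂ (PickL.cons hlA (PickL.cons hlB p')) p₂
        have e : (lA + (lB + w)) + w₂ = (lA + lB) + (w + w₂) := by abel
        rwa [e] at h
      have h := pole_of_oo_orth hm hw
      have e : m + (w + w₂) = (m + w) + w₂ := by abel
      rwa [e] at h
  | @conjR n1 n2 Γ Δ C A B hC d1 d2 ih1 ih2 =>
      intro η Hη w₁ w₂ p₁ p₂
      obtain ⟨nn, w, hn, p', rfl⟩ := pickR_cons_inv p₂ C _ rfl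
      have hCI : interp η φs C [] = interp η φs (.conj A B) [] :=
        interp_conv (fun x s => (Hη x s).1) Hφ hC [] (by simp)
      rw [hCI] at hn
      have hn' : nn ∈ orthS {x | ∃ lA ∈ interp η φs A [],
          ∃ lB ∈ interp η φs B [], x = lA + lB} := by
        have : orthS (ooS {x | ∃ lA ∈ interp η φs A [],
            ∃ lB ∈ interp η φs B [], x = lA + lB}) = orthS _ := orth_oo _
        rw [← this]
        exact hn
      have hA : (w₁ + w) ∈ interp η φs A [] := by
        apply interp_fact
        refine mem_oo_of_orth ?_
        intro nA hnA
        have h := ih1 η Hη w₁ (nA + w) p₁ (PickR.cons hnA p')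
        have e : w₁ + (nA + w) = (w₁ + w) + nA := by abel
        rwa [e] at h
      have hB : (w₁ + w) ∈ interp η φs B [] := by
        apply interp_fact
        refine mem_oo_of_orth ?_
        intro nB hnB
        have h := ih2 η Hη w₁ (nB + w) p₁ (PickR.cons hnB p')
        have e : w₁ + (nB + w) = (w₁ + w) + nB := by abel
        rwa [e] at h
      have h := hn' ((w₁ + w) + (w₁ + w)) ⟨_, hA, _, hB, rfl⟩
      have e : ((w₁ + w) + (w₁ + w)) + nn = (w₁ + w) + (w₁ + w) + nn := by abel
      rw [e] at h
      have h2 := pole_contr h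
      have e' : (w₁ + w) + nn = w₁ + (nn + w) := by abel
      rwa [e'] at h2
  | @disjL n1 n2 Γ Δ C A B hC d1 d2 ih1 ih2 =>
      intro η Hη w₁ w₂ p₁ p₂
      obtain ⟨m, w, hm, p', rfl⟩ := pickL_cons_inv p₁ C _ rfl
      have hCI : interp η φs C [] = interp η φs (.disj A B) [] :=
        interp_conv (fun x s => (Hη x s).1) Hφ hC [] (by simp)
      rw [hCI] at hm
      have hA : (w + w₂) ∈ orthS (interp η φs A []) := by
        intro lA hlA
        have h := ih1 η Hη (lA + w) w₂ (PickL.cons hlA p') p₂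
        have e : (lA + w) + w₂ = lA + (w + w₂) := by abel
        rwa [e] at h
      have hB : (w + w₂) ∈ orthS (interp η φs B []) := by
        intro lB hlB
        have h := ih2 η Hη (lB + w) w₂ (PickL.cons hlB p') p₂
        have e : (lB + w) + w₂ = lB + (w + w₂) := by abel
        rwa [e] at h
      have h := hm ((w + w₂) + (w + w₂)) ⟨_, hA, _, hB, rfl⟩
      have e : ((w + w₂) + (w + w₂)) + m = (w + w₂) + (w + w₂) + m := by abel
      rw [e] at h
      have h2 := pole_contr h
      have e' : (w + w₂) + m = (m + w) + w₂ := by abel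
      rwa [e'] at h2
  | @disjR n1 Γ Δ C A B hC d1 ih =>
      intro η Hη w₁ w₂ p₁ p₂
      obtain ⟨nn, w, hn, p', rfl⟩ := pickR_cons_inv p₂ C _ rfl
      have hCI : interp η φs C [] = interp η φs (.disj A B) [] :=
        interp_conv (fun x s => (Hη x s).1) Hφ hC [] (by simp)
      rw [hCI] at hn
      have hw : (w₁ + w) ∈ orthS {x | ∃ rA ∈ orthS (interp η φs A []),
          ∃ rB ∈ orthS (interp η φs B []), x = rA + rB} := by
        rintro y ⟨rA, hrA, rB, hrB, rfl⟩
        have h := ih η Hη w₁ (rA + (rB + w)) p₁ (PickR.cons hrA (PickR.cons hrB p'))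
        have e : w₁ + (rA + (rB + w)) = (rA + rB) + (w₁ + w) := by abel
        rwa [e] at h
      have h := hn (w₁ + w) hw
      have e : (w₁ + w) + nn = w₁ + (nn + w) := by abel
      rwa [e] at h
  | @botL Γ Δ A hA =>
      intro η Hη w₁ w₂ p₁ p₂
      obtain ⟨m, w, hm, p', rfl⟩ := pickL_cons_inv p₁ A _ rfl
      have hCI : interp η φs A [] = interp η φs (.bot) [] :=
        interp_conv (fun x s => (Hη x s).1) Hφ hA [] (by simp)
      rw [hCI] at hm
      have hw : (w + w₂) ∈ orthS {(({Fm.bot} : Multiset (Fm S)), (0 : Multiset (Fm S)))} := by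
        intro y hy
        rw [Set.mem_singleton_iff] at hy
        subst hy
        show Deriv S ({Fm.bot} + (w + w₂).1) (0 + (w + w₂).2)
        rw [Multiset.singleton_add, zero_add]
        exact Deriv.botL
      have h := pole_of_oo_orth hm hw
      have e : m + (w + w₂) = (m + w) + w₂ := by abel
      rwa [e] at h
  | @allL n1 Γ Δ B C A s t hB hC ht d1 ih =>
      intro η Hη w₁ w₂ p₁ p₂
      obtain ⟨m, w, hm, p', rfl⟩ := pickL_cons_inv p₁ B _ rfl
      have SEη : ∀ x s', SEq (η x s') := fun x s' => (Hη x s').1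
      have hBI : interp η φs B [] = interp η φs (.all s A) [] :=
        interp_conv SEη Hφ hB [] (by simp)
      rw [hBI] at hm
      have hno : noQv t := sorted_noQv ht rfl
      have hGood : GoodF s (fun v => evalE η (fun _ => φs) t v) :=
        good_wit Hη (fun _ => Hφ) ht
      have hminst : m ∈ interp η φs A [fun v => evalE η (fun _ => φs) t v] := by
        have := Set.mem_iInter.1 hm ⟨_, hGood⟩
        simpa using this
      have hCeq : interp η φs C [] = interp η φs A [fun v => evalE η (fun _ => φs) t v] := by
        have h1 : interp η φs C [] = interp η φs (EFm.openF t 0 A) [] :=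
          interp_conv SEη Hφ hC [] (by simp)
        rw [h1]
        have h2 := interp_open (φs := φs) hno (fun v => evalE η (fun _ => φs) t v)
          (fun χ v => evalE_chi_irrel hno v) A []
        simpa using h2
      have h := ih η Hη (m + w) w₂ (PickL.cons (by rw [hCeq]; exact hminst) p') p₂
      exact h
  | @allR n1 Γ Δ B A s x hB hx1 hx2 hx3 d1 ih =>
      intro η Hη w₁ w₂ p₁ p₂
      obtain ⟨nn, w, hn, p', rfl⟩ := pickR_cons_inv p₂ B _ rfl
      have SEη : ∀ x s', SEq (η x s') := fun x s' => (Hη x s').1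
      have hBI : interp η φs B [] = interp η φs (.all s A) [] :=
        interp_conv SEη Hφ hB [] (by simp)
      rw [hBI] at hn
      have hu : (w₁ + w) ∈ interp η φs (.all s A) [] := by
        refine Set.mem_iInter.2 (fun φ => ?_)
        apply interp_fact
        refine mem_oo_of_orth ?_
        intro rA hrA
        have Hη' := updEta_good (x := x) (s := s) Hη φ.2
        have etairr : ∀ B' : EFm S, x ∉ B'.fvs →
            interp η φs B' [] = interp (updEta η x s φ.1) φs B' [] := by
          intro B' hB'
          refine interp_eta_irrel (fun y hy => ?_) []
          exact (updEta_ne (by rintro rfl; exact hB' hy)).symm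
        have pΓ : PickL (updEta η x s φ.1) φs Γ w₁ :=
          pickL_congr (fun B' hB' => etairr B' (fun hy => hx1 ⟨B', hB', hy⟩)) p₁
        have pΔ : PickR (updEta η x s φ.1) φs Δ w :=
          pickR_congr (fun B' hB' => etairr B' (fun hy => hx2 ⟨B', hB', hy⟩)) p'
        have hAeq : interp (updEta η x s φ.1) φs (EFm.openF (.evar x s) 0 A) []
            = interp η φs A [φ.1] := by
          have hno : noQv (ETm.evar (S := S) x s) := trivial
          have h2 := interp_open (η := updEta η x s φ.1) (φs := φs) hno φ.1
            (fun χ v => by show updEta η x s φ.1 x s v = φ.1 v; rw [updEta_self]) A []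
          have h3 : interp (updEta η x s φ.1) φs A [φ.1] = interp η φs A [φ.1] :=
            (interp_eta_irrel (fun y hy => updEta_ne (by rintro rfl; exact hx3 hy)) [φ.1])
          rw [← h3]
          simpa using h2
        have h := ih (updEta η x s φ.1) Hη' w₁ (rA + w) pΓ
          (PickR.cons (by rw [hAeq]; exact hrA) pΔ)
        have e : w₁ + (rA + w) = (w₁ + w) + rA := by abel
        rwa [e] at h
      have h := hn (w₁ + w) hu
      have e : (w₁ + w) + nn = w₁ + (nn + w) := by abel
      rwa [e] at h
  | @exL n1 Γ Δ B A s x hB hx1 hx2 hx3 d1 ih =>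
      intro η Hη w₁ w₂ p₁ p₂
      obtain ⟨m, w, hm, p', rfl⟩ := pickL_cons_inv p₁ B _ rfl
      have SEη : ∀ x s', SEq (η x s') := fun x s' => (Hη x s').1
      have hBI : interp η φs B [] = interp η φs (.ex s A) [] :=
        interp_conv SEη Hφ hB [] (by simp)
      rw [hBI] at hm
      have hw : (w + w₂) ∈ orthS (⋃ φ : {φ : VFn S // GoodF s φ},
          interp η φs A (φ.1 :: [])) := by
        intro y hy
        obtain ⟨Yset, ⟨φ, rfl⟩, hyY⟩ := hy
        have Hη' := updEta_good (x := x) (s := s) Hη φ.2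
        have etairr : ∀ B' : EFm S, x ∉ B'.fvs →
            interp η φs B' [] = interp (updEta η x s φ.1) φs B' [] := by
          intro B' hB'
          refine interp_eta_irrel (fun y hy => ?_) []
          exact (updEta_ne (by rintro rfl; exact hB' hy)).symm
        have pΓ : PickL (updEta η x s φ.1) φs Γ w :=
          pickL_congr (fun B' hB' => etairr B' (fun hy => hx1 ⟨B', hB', hy⟩)) p'
        have pΔ : PickR (updEta η x s φ.1) φs Δ w₂ :=
          pickR_congr (fun B' hB' => etairr B' (fun hy => hx2 ⟨B', hB', hy⟩)) p₂
        have hAeq : interp (updEta η x s φ.1) φs (EFm.openF (.evar x s) 0 A) []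
            = interp η φs A [φ.1] := by
          have hno : noQv (ETm.evar (S := S) x s) := trivial
          have h2 := interp_open (η := updEta η x s φ.1) (φs := φs) hno φ.1
            (fun χ v => by show updEta η x s φ.1 x s v = φ.1 v; rw [updEta_self]) A []
          have h3 : interp (updEta η x s φ.1) φs A [φ.1] = interp η φs A [φ.1] :=
            (interp_eta_irrel (fun y hy => updEta_ne (by rintro rfl; exact hx3 hy)) [φ.1])
          rw [← h3]
          simpa using h2
        have hyY' : y ∈ interp (updEta η x s φ.1) φs (EFm.openF (.evar x s) 0 A) [] := by
          rw [hAeq]; exact hyY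
        have h := ih (updEta η x s φ.1) Hη' (y + w) w₂ (PickL.cons hyY' pΓ) pΔ
        have e : (y + w) + w₂ = y + (w + w₂) := by abel
        rwa [e] at h
      have h := pole_of_oo_orth hm hw
      have e : m + (w + w₂) = (m + w) + w₂ := by abel
      rwa [e] at h
  | @exR n1 Γ Δ B C A s t hB hC ht d1 ih =>
      intro η Hη w₁ w₂ p₁ p₂
      obtain ⟨nn, w, hn, p', rfl⟩ := pickR_cons_inv p₂ B _ rfl
      have SEη : ∀ x s', SEq (η x s') := fun x s' => (Hη x s').1
      have hBI : interp η φs B [] = interp η φs (.ex s A) [] :=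
        interp_conv SEη Hφ hB [] (by simp)
      rw [hBI] at hn
      have hno : noQv t := sorted_noQv ht rfl
      have hGood : GoodF s (fun v => evalE η (fun _ => φs) t v) :=
        good_wit Hη (fun _ => Hφ) ht
      have hCeq : interp η φs C [] = interp η φs A [fun v => evalE η (fun _ => φs) t v] := by
        have h1 : interp η φs C [] = interp η φs (EFm.openF t 0 A) [] :=
          interp_conv SEη Hφ hC [] (by simp)
        rw [h1]
        have h2 := interp_open (φs := φs) hno (fun v => evalE η (fun _ => φs) t v)
          (fun χ v => evalE_chi_irrel hno v) A []
        simpa using h2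
      have hu : (w₁ + w) ∈ interp η φs A [fun v => evalE η (fun _ => φs) t v] := by
        apply interp_fact
        refine mem_oo_of_orth ?_
        intro rC hrC
        have h := ih η Hη w₁ (rC + w) p₁ (PickR.cons (by rw [hCeq]; exact hrC) p')
        have e : w₁ + (rC + w) = (w₁ + w) + rC := by abel
        rwa [e] at h
      have hu2 : (w₁ + w) ∈ (⋃ φ : {φ : VFn S // GoodF s φ}, interp η φs A (φ.1 :: [])) :=
        Set.mem_iUnion.2 ⟨⟨_, hGood⟩, hu⟩
      have h := hn (w₁ + w) (subset_oo _ hu2)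
      have e : (w₁ + w) + nn = w₁ + (nn + w) := by abel
      rwa [e] at h


/- ########################################################################
   PART 7 : simultaneous instantiation in binding logic, freshness
   ######################################################################## -/

/-- simultaneous substitution of the de Bruijn variables above threshold `m` -/
def sTm (ρ : ℕ → Tm S) : ℕ → Tm S → Tm S
  | m, .bvar j => if j < m then .bvar j else ρ (j - m)
  | _, .fvar x => .fvar x
  | m, .app f a => .app f (fun i => sTm ρ (m + (S.far f).get i) (a i))

/-- simultaneous instantiation of the quantifier variables above `k` -/
def sOpen (ρ : ℕ → Tm S) : ℕ → Fm S → Fm S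
  | k, .atom P a => .atom P (fun i => sTm ρ (k + (S.par P).get i) (a i))
  | k, .imp A B => .imp (sOpen ρ k A) (sOpen ρ k B)
  | k, .conj A B => .conj (sOpen ρ k A) (sOpen ρ k B)
  | k, .disj A B => .disj (sOpen ρ k A) (sOpen ρ k B)
  | _, .bot => .bot
  | k, .all A => .all (sOpen ρ (k+1) A)
  | k, .ex A => .ex (sOpen ρ (k+1) A)

theorem openT_closed (u : Tm S) : ∀ (t : Tm S) (d m : ℕ), Tm.WF d t → d ≤ m →
    Tm.openT u m t = t := by
  intro t
  induction t with
  | bvar j =>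
      intro d m hw hdm
      have : j < d := hw
      simp only [Tm.openT]
      rw [if_neg (by omega)]
  | fvar x => intro _ _ _ _; rfl
  | app f a ih =>
      intro d m hw hdm
      simp only [Tm.openT]
      congr 1
      funext i
      exact ih i (d + (S.far f).get i) _ (hw i) (by omega)

theorem sTm_WF (ρ : ℕ → Tm S) : ∀ (t : Tm S) (m : ℕ), Tm.WF m t → sTm ρ m t = t := by
  intro t
  induction t with
  | bvar j =>
      intro m hw
      have : j < m := hw
      simp only [sTm]
      rw [if_pos this]
  | fvar x => intro _ _; rfl
  | app f a ih =>
      intro m hw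
      simp only [sTm]
      congr 1
      funext i
      exact ih i _ (hw i)

theorem sOpen_WF (ρ : ℕ → Tm S) : ∀ (A : Fm S) (k : ℕ), Fm.WF k A → sOpen ρ k A = A := by
  intro A
  induction A with
  | atom P a =>
      intro k hw
      simp only [sOpen]
      congr 1
      funext i
      exact sTm_WF ρ (a i) _ (hw i)
  | imp A B ih1 ih2 => intro k hw; simp only [sOpen]; rw [ih1 k hw.1, ih2 k hw.2]
  | conj A B ih1 ih2 => intro k hw; simp only [sOpen]; rw [ih1 k hw.1, ih2 k hw.2]
  | disj A B ih1 ih2 => intro k hw; simp only [sOpen]; rw [ih1 k hw.1, ih2 k hw.2]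
  | bot => intro _ _; rfl
  | all A ih => intro k hw; simp only [sOpen]; rw [ih (k+1) hw]
  | ex A ih => intro k hw; simp only [sOpen]; rw [ih (k+1) hw]

/-- prepend a term to a substitution -/
def consT (u : Tm S) (ρ : ℕ → Tm S) : ℕ → Tm S :=
  fun j => match j with
  | 0 => u
  | j + 1 => ρ j

theorem openT_sTm (u : Tm S) (ρ : ℕ → Tm S) (hρ : ∀ j, Tm.WF 0 (ρ j)) :
    ∀ (t : Tm S) (m : ℕ), Tm.openT u m (sTm ρ (m+1) t) = sTm (consT u ρ) m t := by
  intro t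
  induction t with
  | bvar j =>
      intro m
      rcases lt_trichotomy j m with h | h | h
      · simp only [sTm]
        rw [if_pos (by omega : j < m + 1), if_pos h]
        simp only [Tm.openT]
        rw [if_neg (by omega)]
      · subst h
        simp only [sTm]
        rw [if_pos (by omega : j < j + 1), if_neg (by omega : ¬ j < j)]
        simp only [Tm.openT]
        simp [consT]
      · simp only [sTm]
        rw [if_neg (by omega : ¬ j < m + 1), if_neg (by omega : ¬ j < m)]
        have e : j - m = (j - (m+1)) + 1 := by omega
        rw [e]
        show Tm.openT u m (ρ (j - (m+1))) = consT u ρ ((j - (m+1)) + 1)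
        rw [openT_closed u _ 0 m (hρ _) (by omega)]
        rfl
  | fvar x => intro m; rfl
  | app f a ih =>
      intro m
      simp only [sTm, Tm.openT]
      congr 1
      funext i
      have e : m + 1 + (S.far f).get i = (m + (S.far f).get i) + 1 := by omega
      rw [e, ih i (m + (S.far f).get i)]

theorem openF_sOpen (u : Tm S) (ρ : ℕ → Tm S) (hρ : ∀ j, Tm.WF 0 (ρ j)) :
    ∀ (A : Fm S) (k : ℕ), Fm.openF u k (sOpen ρ (k+1) A) = sOpen (consT u ρ) k A := by
  intro A
  induction A with
  | atom P a =>
      intro k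
      simp only [sOpen, Fm.openF]
      congr 1
      funext i
      have e : k + 1 + (S.par P).get i = (k + (S.par P).get i) + 1 := by omega
      rw [e, openT_sTm u ρ hρ (a i) (k + (S.par P).get i)]
  | imp A B ih1 ih2 => intro k; simp only [sOpen, Fm.openF]; rw [ih1 k, ih2 k]
  | conj A B ih1 ih2 => intro k; simp only [sOpen, Fm.openF]; rw [ih1 k, ih2 k]
  | disj A B ih1 ih2 => intro k; simp only [sOpen, Fm.openF]; rw [ih1 k, ih2 k]
  | bot => intro _; rfl
  | all A ih => intro k; simp only [sOpen, Fm.openF]; rw [ih (k+1)]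
  | ex A ih => intro k; simp only [sOpen, Fm.openF]; rw [ih (k+1)]

/- ### finiteness of free variables, fresh names -/

theorem tm_fv_fin : ∀ t : Tm S, (Tm.fv t).Finite := by
  intro t
  induction t with
  | bvar j => exact Set.finite_empty
  | fvar x => exact Set.finite_singleton x
  | app f a ih => exact Set.finite_iUnion ih

theorem fm_fv_fin : ∀ A : Fm S, (Fm.fv A).Finite := by
  intro A
  induction A with
  | atom P a => exact Set.finite_iUnion (fun i => tm_fv_fin (a i))
  | imp A B ih1 ih2 => exact Set.Finite.union ih1 ih2
  | conj A B ih1 ih2 => exact Set.Finite.union ih1 ih2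
  | disj A B ih1 ih2 => exact Set.Finite.union ih1 ih2
  | bot => exact Set.finite_empty
  | all A ih => exact ih
  | ex A ih => exact ih

theorem mFv_zero : mFv (0 : Multiset (Fm S)) = ∅ := by
  ext x; simp [mFv]

theorem mFv_cons (A : Fm S) (Γ : Multiset (Fm S)) : mFv (A ::ₘ Γ) = A.fv ∪ mFv Γ := by
  ext x
  simp only [mFv, Set.mem_setOf_eq, Set.mem_union, Multiset.mem_cons]
  constructor
  · rintro ⟨B, (rfl | hB), hx⟩
    · exact Or.inl hx
    · exact Or.inr ⟨B, hB, hx⟩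
  · rintro (hx | ⟨B, hB, hx⟩)
    · exact ⟨A, Or.inl rfl, hx⟩
    · exact ⟨B, Or.inr hB, hx⟩

theorem mFv_fin (Γ : Multiset (Fm S)) : (mFv Γ).Finite := by
  induction Γ using Multiset.induction_on with
  | empty => rw [mFv_zero]; exact Set.finite_empty
  | cons A Γ ih => rw [mFv_cons]; exact Set.Finite.union (fm_fv_fin A) ih

theorem exists_fresh (X : Set ℕ) (hX : X.Finite) : ∃ x, x ∉ X := by
  have := hX.infinite_compl
  obtain ⟨x, hx⟩ := this.nonempty
  exact ⟨x, hx⟩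


/- ########################################################################
   PART 8 : adequacy
   ######################################################################## -/

/-- the canonical assignment of named variables -/
def η0 (S : BSig) : ℕ → Srt → VFn S := fun x _ _ => cVal (.fvar (2*x))

theorem η0_good : ∀ x s, GoodF s (η0 S x s) :=
  fun x s => good_const (U := Tm.fvar (2*x)) (by exact True.intro) s

theorem headOf_const (U : Tm S) : headOf (fun _ => cVal U) = U := by
  unfold headOf
  simp [cVal]

theorem readb_evenvar (p x : ℕ) : readb (S := S) p (.fvar (2*x)) = .fvar x := by
  have h1 : (2*x) % 2 = 0 := by omega
  have h2 : (2*x) / 2 = x := by omega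
  simp [readb, h1, h2]

theorem liftV_vB (k : ℕ) : liftV (S := S) k vB = vB := by
  match k with
  | 0 => rfl
  | m + 1 =>
      funext π
      match π with
      | [] => rfl
      | j :: π' =>
          show (if j < m+1 then (if π' = [] then some (Tm.bvar j) else none)
            else (vB ((j - (m+1)) :: π')).map (shiftTm (m+1) 0)) = vB (j :: π')
          by_cases hj : j < m + 1
          · rw [if_pos hj]
            match π' with
            | [] => rfl
            | _ :: _ => rfl
          · rw [if_neg hj]
            match π' with
            | [] =>
                show (some (Tm.bvar (j - (m+1)))).map (shiftTm (m+1) 0) = some (Tm.bvar j)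
                simp only [Option.map_some, shiftTm]
                rw [if_neg (by omega : ¬ (j - (m+1) < 0))]
                congr 2
                omega
            | _ :: _ => rfl

/-- the decode of the head of an atom argument assignment entry -/
def ρof (L : List (VFn S)) (φs : VFn S) : ℕ → Tm S :=
  fun k => readb 0 (headOf (L.getD k φs))

theorem ρof_WF (L : List (VFn S)) (φs : VFn S) : ∀ k, Tm.WF 0 (ρof L φs k) :=
  fun k => readb_WF _ 0

/-- canonical encoding of a binding term under an assignment stack -/
def EAc (L : List (VFn S)) (φs : VFn S) : ℕ → Tm S → Tm S
  | p, .bvar i => if i < p then .bvar i else headOf (L.getD (i - p) φs)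
  | _, .fvar x => .fvar (2*x)
  | p, .app f a => .app f (fun i => EAc L φs (p + (S.far f).get i) (a i))

theorem term_adeq (φs : VFn S) : ∀ (t : Tm S) (p : ℕ) (L : List (VFn S)),
    (∀ φ ∈ L, GoodF (.tm 0) φ) → Tm.WF (L.length + p) t →
    ((evalE (η0 S) (chiL L φs) (Ft S p t) vB) []).getD (junkT S) = EAc L φs p t
    ∧ (∀ π, π ≠ [] → ((evalE (η0 S) (chiL L φs) (Ft S p t) vB) π).getD (junkT S) = junkT S) := by
  intro t
  induction t with
  | bvar i =>
      intro p L hL hWF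
      by_cases hip : i < p
      · simp only [Ft, if_pos hip]
        constructor
        · show (vB ((i + 1 - 1) :: [])).getD (junkT S) = _
          have e : i + 1 - 1 = i := by omega
          rw [e]
          show (some (Tm.bvar i)).getD (junkT S) = _
          simp only [EAc, if_pos hip, Option.getD_some]
        · intro π hπ
          show (vB ((i + 1 - 1) :: π)).getD (junkT S) = junkT S
          have e : i + 1 - 1 = i := by omega
          rw [e]
          match π, hπ with
          | _ :: _, _ => rfl
      · have hiL : i - p < L.length := by
          have : i < L.length + p := hWF
          omega
        have hent : GoodF (.tm 0) (chiL L φs (i - p)) := by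
          show GoodF (.tm 0) (L.getD (i - p) φs)
          rw [List.getD_eq_getElem _ _ hiL]
          exact hL _ (List.getElem_mem hiL)
        have hhd : headOf (chiL L φs (i - p)) = headOf (L.getD (i - p) φs) := rfl
        by_cases hp : p = 0
        · subst hp
          simp only [Ft, if_neg hip, if_pos rfl]
          constructor
          · show ((chiL L φs (i - 0)) vB []).getD (junkT S) = _
            rw [(good_head hent vB).1, hhd]
            simp only [EAc, if_neg hip]
          · intro π hπ
            exact (good_head hent vB).2.1 π hπ
        · simp only [Ft, if_neg hip, if_neg hp]
          constructor
          · show ((chiL L φs (i - p)) (evalE (η0 S) (chiL L φs) (upChain S 0 p) vB) []).getD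
                (junkT S) = _
            rw [(good_head hent _).1, hhd]
            simp only [EAc, if_neg hip]
          · intro π hπ
            exact (good_head hent _).2.1 π hπ
  | fvar x =>
      intro p L hL hWF
      by_cases hp : p = 0
      · subst hp
        simp only [Ft, if_pos rfl]
        constructor
        · show ((cVal (Tm.fvar (S := S) (2*x))) []).getD (junkT S) = _
          simp [cVal, EAc]
        · intro π hπ
          show ((cVal (Tm.fvar (S := S) (2*x))) π).getD (junkT S) = junkT S
          simp [cVal, hπ]
      · simp only [Ft, if_neg hp]
        constructor
        · show ((cVal (Tm.fvar (S := S) (2*x))) []).getD (junkT S) = _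
          simp [cVal, EAc]
        · intro π hπ
          show ((cVal (Tm.fvar (S := S) (2*x))) π).getD (junkT S) = junkT S
          simp [cVal, hπ]
  | app f a ih =>
      intro p L hL hWF
      constructor
      · show (Tm.app f (fun i => ((evalE (η0 S) (chiL L φs) (Ft S (p + (S.far f).get i) (a i))
            (liftV ((S.far f).get i) vB)) []).getD (junkT S))) = _
        simp only [EAc]
        congr 1
        funext i
        rw [liftV_vB]
        have hw : Tm.WF (L.length + (p + (S.far f).get i)) (a i) := by
          have := hWF i
          have e : L.length + p + (S.far f).get i = L.length + (p + (S.far f).get i) := by omega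
          rwa [e] at this
        exact (ih i (p + (S.far f).get i) L hL hw).1
      · intro π hπ
        show ((cVal (Tm.app f _)) π).getD (junkT S) = junkT S
        simp [cVal, hπ]

theorem readb_EAc (φs : VFn S) : ∀ (t : Tm S) (p : ℕ) (L : List (VFn S)),
    (∀ φ ∈ L, GoodF (.tm 0) φ) → Tm.WF (L.length + p) t →
    readb p (EAc L φs p t) = sTm (ρof L φs) p t := by
  intro t
  induction t with
  | bvar i =>
      intro p L hL hWF
      by_cases hip : i < p
      · simp only [EAc, if_pos hip, readb, sTm]
      · have hiL : i - p < L.length := by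
          have : i < L.length + p := hWF
          omega
        have hent : GoodF (.tm 0) (L.getD (i - p) φs) := by
          rw [List.getD_eq_getElem _ _ hiL]
          exact hL _ (List.getElem_mem hiL)
        simp only [EAc, if_neg hip, sTm]
        show readb p (headOf (L.getD (i - p) φs)) = ρof L φs (i - p)
        have hbnd : bnd 0 (headOf (L.getD (i - p) φs)) := (good_head hent vB).2.2
        exact readb_depth _ 0 p 0 hbnd (by omega) (by omega)
  | fvar x =>
      intro p L hL hWF
      simp only [EAc, sTm]
      exact readb_evenvar p x
  | app f a ih =>
      intro p L hL hWF
      simp only [EAc, readb, sTm]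
      congr 1
      funext i
      have hw : Tm.WF (L.length + (p + (S.far f).get i)) (a i) := by
        have := hWF i
        have e : L.length + p + (S.far f).get i = L.length + (p + (S.far f).get i) := by omega
        rwa [e] at this
      exact ih i (p + (S.far f).get i) L hL hw

theorem dec_atom (φs : VFn S) (t : Tm S) (p : ℕ) (L : List (VFn S))
    (hL : ∀ φ ∈ L, GoodF (.tm 0) φ) (hWF : Tm.WF (L.length + p) t) :
    decA (η0 S) (chiL L φs) p (Ft S p t) = sTm (ρof L φs) p t := by
  unfold decA
  rw [(term_adeq φs t p L hL hWF).1]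
  exact readb_EAc φs t p L hL hWF


/-- left and right syntactic injections -/
def ℓF (F : Fm S) : MM S := (({F} : Multiset (Fm S)), (0 : Multiset (Fm S)))
def rF (F : Fm S) : MM S := ((0 : Multiset (Fm S)), ({F} : Multiset (Fm S)))

theorem pole_lF {F : Fm S} {n : MM S} : Pole (ℓF F + n) ↔ Deriv S (F ::ₘ n.1) n.2 := by
  show Deriv S ({F} + n.1) (0 + n.2) ↔ _
  rw [Multiset.singleton_add, zero_add]

theorem pole_rF {F : Fm S} {n : MM S} : Pole (rF F + n) ↔ Deriv S n.1 (F ::ₘ n.2) := by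
  show Deriv S (0 + n.1) ({F} + n.2) ↔ _
  rw [Multiset.singleton_add, zero_add]

theorem ρof_cons (φ : VFn S) (L : List (VFn S)) (φs : VFn S) :
    ρof (φ :: L) φs = consT (readb 0 (headOf φ)) (ρof L φs) := by
  funext k
  match k with
  | 0 => rfl
  | k + 1 => rfl

theorem adeq (φs : VFn S) : ∀ (A : Fm S) (L : List (VFn S)),
    (∀ φ ∈ L, GoodF (.tm 0) φ) → Fm.WF L.length A →
    ℓF (sOpen (ρof L φs) 0 A) ∈ interp (η0 S) φs (Ff S A) L
    ∧ rF (sOpen (ρof L φs) 0 A) ∈ orthS (interp (η0 S) φs (Ff S A) L) := by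
  intro A
  induction A with
  | atom P a =>
      intro L hL hWF
      have hat : (fun i => decA (η0 S) (chiL L φs) ((S.par P).get i)
            (Ft S ((S.par P).get i) (a i)))
          = (fun i => sTm (ρof L φs) (0 + (S.par P).get i) (a i)) := by
        funext i
        rw [Nat.zero_add]
        exact dec_atom φs (a i) _ L hL (hWF i)
      constructor
      · show ℓF _ ∈ ooS {(({Fm.atom P _} : Multiset (Fm S)), (0 : Multiset (Fm S)))}
        refine subset_oo _ ?_
        show ℓF (sOpen (ρof L φs) 0 (.atom P a)) ∈ _
        rw [Set.mem_singleton_iff]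
        show ℓF _ = _
        unfold ℓF
        simp only [sOpen]
        rw [hat]
      · show rF _ ∈ orthS (ooS _)
        rw [orth_oo]
        intro y hy
        rw [Set.mem_singleton_iff] at hy
        subst hy
        show Deriv S ({Fm.atom P _} + 0) (0 + {sOpen (ρof L φs) 0 (.atom P a)})
        rw [add_zero, zero_add]
        simp only [sOpen]
        rw [hat]
        exact Deriv.ax _
  | imp A B ihA ihB =>
      intro L hL hWF
      obtain ⟨ihA1, ihA2⟩ := ihA L hL hWF.1
      obtain ⟨ihB1, ihB2⟩ := ihB L hL hWF.2
      constructor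
      · rintro y ⟨lA, hlA, rB, hrB, rfl⟩
        have dA : Deriv S lA.1 ((sOpen (ρof L φs) 0 A) ::ₘ lA.2) := by
          have h := ihA2 lA hlA
          rw [add_comm] at h
          exact pole_rF.1 h
        have dB : Deriv S ((sOpen (ρof L φs) 0 B) ::ₘ rB.1) rB.2 := by
          have h := hrB _ ihB1
          exact pole_lF.1 h
        have prem1 : Deriv S (lA.1 + rB.1) ((sOpen (ρof L φs) 0 A) ::ₘ (lA.2 + rB.2)) := by
          have h1 := deriv_weakR_many rB.2 (deriv_weakL_many rB.1 dA)
          have e1 : rB.1 + lA.1 = lA.1 + rB.1 := by abel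
          have e2 : rB.2 + ((sOpen (ρof L φs) 0 A) ::ₘ lA.2)
              = (sOpen (ρof L φs) 0 A) ::ₘ (lA.2 + rB.2) := by
            simp only [← Multiset.singleton_add]
            abel
          rwa [e1, e2] at h1
        have prem2 : Deriv S ((sOpen (ρof L φs) 0 B) ::ₘ (lA.1 + rB.1)) (lA.2 + rB.2) := by
          have h1 := deriv_weakR_many lA.2 (deriv_weakL_many lA.1 dB)
          have e1 : lA.1 + ((sOpen (ρof L φs) 0 B) ::ₘ rB.1)
              = (sOpen (ρof L φs) 0 B) ::ₘ (lA.1 + rB.1) := by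
            simp only [← Multiset.singleton_add]
            abel
          have e2 : lA.2 + rB.2 = lA.2 + rB.2 := rfl
          rwa [e1] at h1
        have d := Deriv.impL prem1 prem2
        show Deriv S (lA.1 + rB.1 + {sOpen (ρof L φs) 0 (.imp A B)}) (lA.2 + rB.2 + 0)
        have e1 : lA.1 + rB.1 + {sOpen (ρof L φs) 0 (.imp A B)}
            = (Fm.imp (sOpen (ρof L φs) 0 A) (sOpen (ρof L φs) 0 B)) ::ₘ (lA.1 + rB.1) := by
          show lA.1 + rB.1 + {Fm.imp (sOpen (ρof L φs) 0 A) (sOpen (ρof L φs) 0 B)} = _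
          simp only [← Multiset.singleton_add]
          abel
        have e2 : lA.2 + rB.2 + 0 = lA.2 + rB.2 := by abel
        rw [e1, e2]
        exact d
      · intro y hy
        have dI : Deriv S ((sOpen (ρof L φs) 0 A) ::ₘ y.1)
            ((sOpen (ρof L φs) 0 B) ::ₘ y.2) := by
          have h := hy _ ⟨ℓF (sOpen (ρof L φs) 0 A), ihA1, rF (sOpen (ρof L φs) 0 B), ihB2, rfl⟩
          have h' : Deriv S ({sOpen (ρof L φs) 0 A} + 0 + y.1)
              (0 + {sOpen (ρof L φs) 0 B} + y.2) := h
          have e1 : ({sOpen (ρof L φs) 0 A} : Multiset (Fm S)) + 0 + y.1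
              = (sOpen (ρof L φs) 0 A) ::ₘ y.1 := by
            simp only [← Multiset.singleton_add]; abel
          have e2 : (0 : Multiset (Fm S)) + {sOpen (ρof L φs) 0 B} + y.2
              = (sOpen (ρof L φs) 0 B) ::ₘ y.2 := by
            simp only [← Multiset.singleton_add]; abel
          rwa [e1, e2] at h'
        have d := Deriv.impR dI
        have e : y + rF (sOpen (ρof L φs) 0 (.imp A B))
            = rF (sOpen (ρof L φs) 0 (.imp A B)) + y := by abel
        rw [e, pole_rF]
        exact d
  | conj A B ihA ihB =>
      intro L hL hWF
      obtain ⟨ihA1, ihA2⟩ := ihA L hL hWF.1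
      obtain ⟨ihB1, ihB2⟩ := ihB L hL hWF.2
      constructor
      · refine mem_oo_of_orth ?_
        intro n hn
        have h := hn _ ⟨_, ihA1, _, ihB1, rfl⟩
        have h' : Deriv S ({sOpen (ρof L φs) 0 A} + {sOpen (ρof L φs) 0 B} + n.1)
            ((0 : Multiset (Fm S)) + 0 + n.2) := h
        have e1 : ({sOpen (ρof L φs) 0 A} : Multiset (Fm S)) + {sOpen (ρof L φs) 0 B} + n.1
            = (sOpen (ρof L φs) 0 A) ::ₘ (sOpen (ρof L φs) 0 B) ::ₘ n.1 := by
          simp only [← Multiset.singleton_add]; abel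
        have e2 : (0 : Multiset (Fm S)) + 0 + n.2 = n.2 := by abel
        rw [e1, e2] at h'
        have d := Deriv.conjL h'
        rw [pole_lF]
        exact d
      · show rF _ ∈ orthS (ooS _)
        rw [orth_oo]
        rintro y ⟨lA, hlA, lB, hlB, rfl⟩
        have dA : Deriv S lA.1 ((sOpen (ρof L φs) 0 A) ::ₘ lA.2) := by
          have h := ihA2 lA hlA
          rw [add_comm] at h
          exact pole_rF.1 h
        have dB : Deriv S lB.1 ((sOpen (ρof L φs) 0 B) ::ₘ lB.2) := by
          have h := ihB2 lB hlB
          rw [add_comm] at h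
          exact pole_rF.1 h
        have prem1 : Deriv S (lA.1 + lB.1) ((sOpen (ρof L φs) 0 A) ::ₘ (lA.2 + lB.2)) := by
          have h1 := deriv_weakR_many lB.2 (deriv_weakL_many lB.1 dA)
          have e1 : lB.1 + lA.1 = lA.1 + lB.1 := by abel
          have e2 : lB.2 + ((sOpen (ρof L φs) 0 A) ::ₘ lA.2)
              = (sOpen (ρof L φs) 0 A) ::ₘ (lA.2 + lB.2) := by
            simp only [← Multiset.singleton_add]; abel
          rwa [e1, e2] at h1
        have prem2 : Deriv S (lA.1 + lB.1) ((sOpen (ρof L φs) 0 B) ::ₘ (lA.2 + lB.2)) := by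
          have h1 := deriv_weakR_many lA.2 (deriv_weakL_many lA.1 dB)
          have e1 : lA.1 + lB.1 = lA.1 + lB.1 := rfl
          have e2 : lA.2 + ((sOpen (ρof L φs) 0 B) ::ₘ lB.2)
              = (sOpen (ρof L φs) 0 B) ::ₘ (lA.2 + lB.2) := by
            simp only [← Multiset.singleton_add]; abel
          rwa [e2] at h1
        have d := Deriv.conjR prem1 prem2
        show Pole ((lA + lB) + rF (sOpen (ρof L φs) 0 (.conj A B)))
        have e : (lA + lB) + rF (sOpen (ρof L φs) 0 (.conj A B))
            = rF (sOpen (ρof L φs) 0 (.conj A B)) + (lA + lB) := by abel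
        rw [e, pole_rF]
        exact d
  | disj A B ihA ihB =>
      intro L hL hWF
      obtain ⟨ihA1, ihA2⟩ := ihA L hL hWF.1
      obtain ⟨ihB1, ihB2⟩ := ihB L hL hWF.2
      constructor
      · rintro y ⟨rA, hrA, rB, hrB, rfl⟩
        have dA : Deriv S ((sOpen (ρof L φs) 0 A) ::ₘ rA.1) rA.2 := pole_lF.1 (hrA _ ihA1)
        have dB : Deriv S ((sOpen (ρof L φs) 0 B) ::ₘ rB.1) rB.2 := pole_lF.1 (hrB _ ihB1)
        have prem1 : Deriv S ((sOpen (ρof L φs) 0 A) ::ₘ (rA.1 + rB.1)) (rA.2 + rB.2) := by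
          have h1 := deriv_weakR_many rB.2 (deriv_weakL_many rB.1 dA)
          have e1 : rB.1 + ((sOpen (ρof L φs) 0 A) ::ₘ rA.1)
              = (sOpen (ρof L φs) 0 A) ::ₘ (rA.1 + rB.1) := by
            simp only [← Multiset.singleton_add]; abel
          have e2 : rB.2 + rA.2 = rA.2 + rB.2 := by abel
          rwa [e1, e2] at h1
        have prem2 : Deriv S ((sOpen (ρof L φs) 0 B) ::ₘ (rA.1 + rB.1)) (rA.2 + rB.2) := by
          have h1 := deriv_weakR_many rA.2 (deriv_weakL_many rA.1 dB)
          have e1 : rA.1 + ((sOpen (ρof L φs) 0 B) ::ₘ rB.1)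
              = (sOpen (ρof L φs) 0 B) ::ₘ (rA.1 + rB.1) := by
            simp only [← Multiset.singleton_add]; abel
          rwa [e1] at h1
        have d := Deriv.disjL prem1 prem2
        show Deriv S (rA.1 + rB.1 + {sOpen (ρof L φs) 0 (.disj A B)}) (rA.2 + rB.2 + 0)
        have e1 : rA.1 + rB.1 + {sOpen (ρof L φs) 0 (.disj A B)}
            = (Fm.disj (sOpen (ρof L φs) 0 A) (sOpen (ρof L φs) 0 B)) ::ₘ (rA.1 + rB.1) := by
          show rA.1 + rB.1 + {Fm.disj (sOpen (ρof L φs) 0 A) (sOpen (ρof L φs) 0 B)} = _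
          simp only [← Multiset.singleton_add]
          abel
        have e2 : rA.2 + rB.2 + 0 = rA.2 + rB.2 := by abel
        rw [e1, e2]
        exact d
      · intro y hy
        have h := hy _ ⟨rF (sOpen (ρof L φs) 0 A), ihA2, rF (sOpen (ρof L φs) 0 B), ihB2, rfl⟩
        have h' : Deriv S ((0 : Multiset (Fm S)) + 0 + y.1)
            ({sOpen (ρof L φs) 0 A} + {sOpen (ρof L φs) 0 B} + y.2) := h
        have e1 : (0 : Multiset (Fm S)) + 0 + y.1 = y.1 := by abel
        have e2 : ({sOpen (ρof L φs) 0 A} : Multiset (Fm S)) + {sOpen (ρof L φs) 0 B} + y.2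
            = (sOpen (ρof L φs) 0 A) ::ₘ (sOpen (ρof L φs) 0 B) ::ₘ y.2 := by
          simp only [← Multiset.singleton_add]; abel
        rw [e1, e2] at h'
        have d := Deriv.disjR h'
        show Pole (y + rF (Fm.disj (sOpen (ρof L φs) 0 A) (sOpen (ρof L φs) 0 B)))
        have e' : y + rF (Fm.disj (sOpen (ρof L φs) 0 A) (sOpen (ρof L φs) 0 B))
            = rF (Fm.disj (sOpen (ρof L φs) 0 A) (sOpen (ρof L φs) 0 B)) + y := by abel
        rw [e', pole_rF]
        exact d
  | bot =>
      intro L hL hWF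
      constructor
      · exact subset_oo _ rfl
      · show rF _ ∈ orthS (ooS _)
        rw [orth_oo]
        intro y hy
        rw [Set.mem_singleton_iff] at hy
        subst hy
        show Pole (ℓF Fm.bot + rF (sOpen (ρof L φs) 0 Fm.bot))
        rw [pole_lF]
        exact Deriv.botL
  | all A ih =>
      intro L hL hWF
      have hWF' : Fm.WF (L.length + 1) A := hWF
      constructor
      · refine Set.mem_iInter.2 (fun φ => ?_)
        apply interp_fact
        refine mem_oo_of_orth ?_
        intro nA hnA
        have hLg : ∀ ψ ∈ (φ.1 :: L), GoodF (.tm 0) ψ := by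
          intro ψ hψ
          rcases List.mem_cons.1 hψ with h | h
          · exact h ▸ φ.2
          · exact hL ψ h
        have ihh := (ih (φ.1 :: L) hLg (by show Fm.WF (L.length + 1) A; exact hWF')).1
        have hbody : sOpen (ρof (φ.1 :: L) φs) 0 A
            = Fm.openF (readb 0 (headOf φ.1)) 0 (sOpen (ρof L φs) 1 A) := by
          rw [ρof_cons]
          exact (openF_sOpen _ _ (ρof_WF L φs) A 0).symm
        rw [hbody] at ihh
        have h := hnA _ ihh
        rw [pole_lF] at h
        have d := Deriv.allL (readb_WF _ 0) h
        show Pole (ℓF (Fm.all (sOpen (ρof L φs) 1 A)) + nA)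
        rw [pole_lF]
        exact d
      · intro y hy
        obtain ⟨x₀, hx₀⟩ := exists_fresh (mFv y.1 ∪ mFv y.2 ∪ (sOpen (ρof L φs) 1 A).fv)
          ((mFv_fin y.1).union (mFv_fin y.2) |>.union (fm_fv_fin _))
        have hx1 : x₀ ∉ mFv y.1 := fun h => hx₀ (Or.inl (Or.inl h))
        have hx2 : x₀ ∉ mFv y.2 := fun h => hx₀ (Or.inl (Or.inr h))
        have hx3 : x₀ ∉ (sOpen (ρof L φs) 1 A).fv := fun h => hx₀ (Or.inr h)
        set φ0 : VFn S := fun _ => cVal (.fvar (2*x₀)) with hφ0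
        have hG : GoodF (.tm 0) φ0 := good_const (by exact True.intro) _
        have hyA : y ∈ interp (η0 S) φs (Ff S A) (φ0 :: L) := Set.mem_iInter.1 hy ⟨φ0, hG⟩
        have hLg : ∀ ψ ∈ (φ0 :: L), GoodF (.tm 0) ψ := by
          intro ψ hψ
          rcases List.mem_cons.1 hψ with h | h
          · exact h ▸ hG
          · exact hL ψ h
        have ihh := (ih (φ0 :: L) hLg (by show Fm.WF (L.length + 1) A; exact hWF')).2
        have h := ihh y hyA
        have hbody : sOpen (ρof (φ0 :: L) φs) 0 A
            = Fm.openF (Tm.fvar x₀) 0 (sOpen (ρof L φs) 1 A) := by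
          rw [ρof_cons]
          have hh : headOf φ0 = Tm.fvar (2*x₀) := headOf_const _
          rw [hh, readb_evenvar]
          exact (openF_sOpen _ _ (ρof_WF L φs) A 0).symm
        rw [hbody] at h
        rw [add_comm, pole_rF] at h
        have d := Deriv.allR hx1 hx2 hx3 h
        show Pole (y + rF (Fm.all (sOpen (ρof L φs) 1 A)))
        have e : y + rF (Fm.all (sOpen (ρof L φs) 1 A))
            = rF (Fm.all (sOpen (ρof L φs) 1 A)) + y := by abel
        rw [e, pole_rF]
        exact d
  | ex A ih =>
      intro L hL hWF
      have hWF' : Fm.WF (L.length + 1) A := hWF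
      constructor
      · refine mem_oo_of_orth ?_
        intro n hn
        obtain ⟨x₀, hx₀⟩ := exists_fresh (mFv n.1 ∪ mFv n.2 ∪ (sOpen (ρof L φs) 1 A).fv)
          ((mFv_fin n.1).union (mFv_fin n.2) |>.union (fm_fv_fin _))
        have hx1 : x₀ ∉ mFv n.1 := fun h => hx₀ (Or.inl (Or.inl h))
        have hx2 : x₀ ∉ mFv n.2 := fun h => hx₀ (Or.inl (Or.inr h))
        have hx3 : x₀ ∉ (sOpen (ρof L φs) 1 A).fv := fun h => hx₀ (Or.inr h)
        set φ0 : VFn S := fun _ => cVal (.fvar (2*x₀)) with hφ0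
        have hG : GoodF (.tm 0) φ0 := good_const (by exact True.intro) _
        have hLg : ∀ ψ ∈ (φ0 :: L), GoodF (.tm 0) ψ := by
          intro ψ hψ
          rcases List.mem_cons.1 hψ with h | h
          · exact h ▸ hG
          · exact hL ψ h
        have ihh := (ih (φ0 :: L) hLg (by show Fm.WF (L.length + 1) A; exact hWF')).1
        have hmem : ℓF (sOpen (ρof (φ0 :: L) φs) 0 A)
            ∈ (⋃ φ : {φ : VFn S // GoodF (.tm 0) φ}, interp (η0 S) φs (Ff S A) (φ.1 :: L)) :=
          Set.mem_iUnion.2 ⟨⟨φ0, hG⟩, ihh⟩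
        have h := hn _ hmem
        have hbody : sOpen (ρof (φ0 :: L) φs) 0 A
            = Fm.openF (Tm.fvar x₀) 0 (sOpen (ρof L φs) 1 A) := by
          rw [ρof_cons]
          have hh : headOf φ0 = Tm.fvar (2*x₀) := headOf_const _
          rw [hh, readb_evenvar]
          exact (openF_sOpen _ _ (ρof_WF L φs) A 0).symm
        rw [hbody, pole_lF] at h
        have d := Deriv.exL hx1 hx2 hx3 h
        show Pole (ℓF (Fm.ex (sOpen (ρof L φs) 1 A)) + n)
        rw [pole_lF]
        exact d
      · show rF _ ∈ orthS (ooS _)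
        rw [orth_oo]
        intro y hy
        obtain ⟨Yset, ⟨φ, rfl⟩, hyY⟩ := hy
        have hLg : ∀ ψ ∈ (φ.1 :: L), GoodF (.tm 0) ψ := by
          intro ψ hψ
          rcases List.mem_cons.1 hψ with h | h
          · exact h ▸ φ.2
          · exact hL ψ h
        have ihh := (ih (φ.1 :: L) hLg (by show Fm.WF (L.length + 1) A; exact hWF')).2
        have h := ihh y hyY
        have hbody : sOpen (ρof (φ.1 :: L) φs) 0 A
            = Fm.openF (readb 0 (headOf φ.1)) 0 (sOpen (ρof L φs) 1 A) := by
          rw [ρof_cons]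
          exact (openF_sOpen _ _ (ρof_WF L φs) A 0).symm
        rw [hbody] at h
        rw [add_comm, pole_rF] at h
        have d := Deriv.exR (readb_WF _ 0) h
        show Pole (y + rF (Fm.ex (sOpen (ρof L φs) 1 A)))
        have e : y + rF (Fm.ex (sOpen (ρof L φs) 1 A))
            = rF (Fm.ex (sOpen (ρof L φs) 1 A)) + y := by abel
        rw [e, pole_rF]
        exact d


/- ########################################################################
   PART 9 : conclusion
   ######################################################################## -/

/-- a default quantifier value -/
def φJ (S : BSig) : VFn S := fun _ => cVal (junkT S)

theorem φJ_SEq : SEq (φJ S) := (good_const (U := junkT S) (by exact True.intro) (.tm 0)).1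

theorem pick_all_L (Γ : Multiset (Fm S)) (hΓ : ∀ A ∈ Γ, Fm.WF 0 A) :
    PickL (η0 S) (φJ S) (Γ.map (Ff S)) ((Γ, 0) : MM S) := by
  induction Γ using Multiset.induction_on with
  | empty =>
      rw [Multiset.map_zero]
      exact PickL.nil
  | cons A Γ ih =>
      rw [Multiset.map_cons]
      have hA : Fm.WF 0 A := hΓ A (Multiset.mem_cons_self A Γ)
      have hm := (adeq (φJ S) A [] (by intro φ h; simp at h) (by exact hA)).1
      rw [sOpen_WF _ A 0 hA] at hm
      have hp := PickL.cons hm (ih (fun B hB => hΓ B (Multiset.mem_cons_of_mem hB)))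
      have e : ℓF A + ((Γ, 0) : MM S) = ((A ::ₘ Γ, 0) : MM S) := by
        show ({A} + Γ, (0 : Multiset (Fm S)) + 0) = (A ::ₘ Γ, 0)
        rw [Multiset.singleton_add, add_zero]
      rwa [e] at hp

theorem pick_all_R (Δ : Multiset (Fm S)) (hΔ : ∀ A ∈ Δ, Fm.WF 0 A) :
    PickR (η0 S) (φJ S) (Δ.map (Ff S)) ((0, Δ) : MM S) := by
  induction Δ using Multiset.induction_on with
  | empty =>
      rw [Multiset.map_zero]
      exact PickR.nil
  | cons A Δ ih =>
      rw [Multiset.map_cons]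
      have hA : Fm.WF 0 A := hΔ A (Multiset.mem_cons_self A Δ)
      have hm := (adeq (φJ S) A [] (by intro φ h; simp at h) (by exact hA)).2
      rw [sOpen_WF _ A 0 hA] at hm
      have hp := PickR.cons hm (ih (fun B hB => hΔ B (Multiset.mem_cons_of_mem hB)))
      have e : rF A + (((0 : Multiset (Fm S)), Δ) : MM S) = (((0 : Multiset (Fm S)), A ::ₘ Δ) : MM S) := by
        show ((0 : Multiset (Fm S)) + 0, {A} + Δ) = ((0 : Multiset (Fm S)), A ::ₘ Δ)
        rw [Multiset.singleton_add, add_zero]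
      rwa [e] at hp

theorem backward {Γ Δ : Multiset (Fm S)}
    (hΓ : ∀ A ∈ Γ, Fm.WF 0 A) (hΔ : ∀ B ∈ Δ, Fm.WF 0 B)
    (h : DerivMod FConv (Γ.map (Ff S)) (Δ.map (Ff S))) : Deriv S Γ Δ := by
  obtain ⟨n, d⟩ := h
  have hp := soundness (φs := φJ S) φJ_SEq d (η0 S) η0_good
    ((Γ, 0) : MM S) ((0, Δ) : MM S) (pick_all_L Γ hΓ) (pick_all_R Δ hΔ)
  have : Deriv S (Γ + 0) (0 + Δ) := hp
  rwa [add_zero, zero_add] at this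

end BL

/-- **Theorem (translation).**  A sequent `Γ ⊢ Δ` is provable in the sequent calculus
of binding logic if and only if the pre-cooked sequent `Γ' ⊢ Δ'` is provable in
sequent calculus modulo the congruence generated by the rewrite system `σ`. -/
theorem precooking_preserves_provability (S : BSig) (Γ Δ : Multiset (Fm S))
    (hΓ : ∀ A ∈ Γ, Fm.WF 0 A) (hΔ : ∀ B ∈ Δ, Fm.WF 0 B) :
    Deriv S Γ Δ ↔ DerivMod FConv (Γ.map (Ff S)) (Δ.map (Ff S)) := by
  constructor
  · exact BL.forward
  · exact BL.backward hΓ hΔ
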